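/- arXiv:1909.01403 — 11 statements merged into one kernel-verified Lean document; each statement's English description precedes it below -/
import Mathlib

section
/- Let $k \ge 1$ and let $\Pi$ be a $k$-path in a finite diagram $D \subseteq \mathbb{N}^2$. Then $\Pi$ is equivalent to an ordered $k$-path in $D$; that is, there exists an ordered $k$-path in $D$ with the same support as $\Pi$. -/
/-- `Prec A B` : for all `(a₁,b₁) ∈ A`, `(a₂,b₂) ∈ B` with `a₁ ≤ a₂`, `b₁ < b₂`. -/
def Prec (A B : Set (ℕ × ℕ)) : Prop :=
  ∀ p ∈ A, ∀ q ∈ B, p.1 ≤ q.1 → p.2 < q.2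

/-- A path in a diagram `D`: a nonempty sequence of nodes of `D`,
strictly increasing in row index and weakly increasing in column index. -/
def IsPath (D : Finset (ℕ × ℕ)) (π : List (ℕ × ℕ)) : Prop :=
  π ≠ [] ∧ (∀ p ∈ π, p ∈ D) ∧ π.Chain' (fun p q => p.1 < q.1 ∧ p.2 ≤ q.2)

/-- A `k`-path: a sequence of pairwise disjoint paths in `D`. -/
def IsKPath (D : Finset (ℕ × ℕ)) (P : List (List (ℕ × ℕ))) : Prop :=
  (∀ π ∈ P, IsPath D π) ∧ P.Pairwise (fun π ρ => ∀ p ∈ π, p ∉ ρ)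

/-- The support of a path, as a set of nodes. -/
def supp (π : List (ℕ × ℕ)) : Set (ℕ × ℕ) := {p | p ∈ π}

/-- An ordered `k`-path: the supports of the constituent paths are
successively related by `≺`. -/
def IsOrderedKPath (D : Finset (ℕ × ℕ)) (P : List (List (ℕ × ℕ))) : Prop :=
  IsKPath D P ∧ P.Pairwise (fun π ρ => Prec (supp π) (supp ρ))

namespace Stmt8Aux

/-- Level function: `lvl S p` is one more than the sup of levels of points of `S`
weakly below and strictly left of `p`. -/
def lvl (S : Finset (ℕ × ℕ)) (p : ℕ × ℕ) : ℕ :=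
  (S.filter (fun q => p.1 ≤ q.1 ∧ q.2 < p.2)).attach.sup (fun q => lvl S q.1) + 1
termination_by p.2
decreasing_by exact (Finset.mem_filter.mp q.2).2.2

lemma lvl_pos (S : Finset (ℕ × ℕ)) (p : ℕ × ℕ) : 1 ≤ lvl S p := by
  rw [lvl]; omega

lemma lvl_lt {S : Finset (ℕ × ℕ)} {p q : ℕ × ℕ} (hq : q ∈ S) (h1 : p.1 ≤ q.1)
    (h2 : q.2 < p.2) : lvl S q < lvl S p := by
  conv_rhs => rw [lvl]
  have hmem : q ∈ S.filter (fun r => p.1 ≤ r.1 ∧ r.2 < p.2) :=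
    Finset.mem_filter.mpr ⟨hq, h1, h2⟩
  have := Finset.le_sup (f := fun r : {x // x ∈ S.filter (fun r => p.1 ≤ r.1 ∧ r.2 < p.2)} =>
    lvl S r.1) (Finset.mem_attach _ ⟨q, hmem⟩)
  simp only at this
  omega

lemma lvl_mono {S : Finset (ℕ × ℕ)} {p q : ℕ × ℕ} (h1 : p.1 ≤ q.1) (h2 : q.2 ≤ p.2) :
    lvl S q ≤ lvl S p := by
  conv_lhs => rw [lvl]
  conv_rhs => rw [lvl]
  have : ((S.filter (fun r => q.1 ≤ r.1 ∧ r.2 < q.2)).attach.sup (fun r => lvl S r.1)) ≤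
      ((S.filter (fun r => p.1 ≤ r.1 ∧ r.2 < p.2)).attach.sup (fun r => lvl S r.1)) := by
    apply Finset.sup_le
    intro r _
    have hr := Finset.mem_filter.mp r.2
    have hmem : r.1 ∈ S.filter (fun s => p.1 ≤ s.1 ∧ s.2 < p.2) :=
      Finset.mem_filter.mpr ⟨hr.1, le_trans h1 hr.2.1, lt_of_lt_of_le hr.2.2 h2⟩
    exact Finset.le_sup (f := fun s : {x // x ∈ S.filter (fun s => p.1 ≤ s.1 ∧ s.2 < p.2)} =>
      lvl S s.1) (Finset.mem_attach _ ⟨r.1, hmem⟩)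
  omega

lemma exists_lvl_eq (S : Finset (ℕ × ℕ)) (i : ℕ) (h1 : 1 ≤ i) :
    ∀ n (p : ℕ × ℕ), p.2 ≤ n → p ∈ S → i ≤ lvl S p → ∃ q ∈ S, lvl S q = i := by
  intro n
  induction n using Nat.strong_induction_on with
  | _ n IH =>
    intro p hpn hp hi
    by_cases heq : lvl S p = i
    · exact ⟨p, hp, heq⟩
    have hlt : i < lvl S p := lt_of_le_of_ne hi (Ne.symm heq)
    have hup : lvl S p =
        (S.filter (fun q => p.1 ≤ q.1 ∧ q.2 < p.2)).attach.sup (fun q => lvl S q.1) + 1 := by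
      rw [lvl]
    have hsup : 1 ≤ (S.filter (fun q => p.1 ≤ q.1 ∧ q.2 < p.2)).attach.sup
        (fun q => lvl S q.1) := by omega
    have hne : ((S.filter (fun q => p.1 ≤ q.1 ∧ q.2 < p.2)).attach).Nonempty := by
      by_contra h
      rw [Finset.not_nonempty_iff_eq_empty] at h
      rw [h, Finset.sup_empty, Nat.bot_eq_zero] at hsup
      omega
    obtain ⟨r, _, hr⟩ := Finset.exists_mem_eq_sup _ hne (fun q => lvl S q.1)
    have hrf := Finset.mem_filter.mp r.2
    have hrn : r.1.2 < p.2 := hrf.2.2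
    have : i ≤ lvl S r.1 := by omega
    exact IH (n - 1) (by omega) r.1 (by omega) hrf.1 this

lemma exists_chain (S : Finset (ℕ × ℕ)) :
    ∀ n (p : ℕ × ℕ), p.2 ≤ n → p ∈ S →
    ∃ c : List (ℕ × ℕ), List.Chain (fun a b => a.1 ≤ b.1 ∧ b.2 < a.2) p c ∧
      (∀ x ∈ c, x ∈ S) ∧ c.length + 1 = lvl S p := by
  intro n
  induction n using Nat.strong_induction_on with
  | _ n IH =>
    intro p hpn hp
    have hup : lvl S p =
        (S.filter (fun q => p.1 ≤ q.1 ∧ q.2 < p.2)).attach.sup (fun q => lvl S q.1) + 1 := by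
      rw [lvl]
    by_cases h0 : (S.filter (fun q => p.1 ≤ q.1 ∧ q.2 < p.2)).attach = ∅
    · refine ⟨[], List.Chain.nil, by simp, ?_⟩
      rw [hup, h0, Finset.sup_empty, Nat.bot_eq_zero]; rfl
    have hne : ((S.filter (fun q => p.1 ≤ q.1 ∧ q.2 < p.2)).attach).Nonempty :=
      Finset.nonempty_of_ne_empty h0
    obtain ⟨r, _, hr⟩ := Finset.exists_mem_eq_sup _ hne (fun q => lvl S q.1)
    have hrf := Finset.mem_filter.mp r.2
    have hrn : r.1.2 < p.2 := hrf.2.2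
    obtain ⟨c, hc1, hc2, hc3⟩ := IH (n - 1) (by omega) r.1 (by omega) hrf.1
    refine ⟨r.1 :: c, List.Chain.cons ⟨hrf.2.1, hrf.2.2⟩ hc1, ?_, ?_⟩
    · intro x hx
      rcases List.mem_cons.mp hx with h | h
      · exact h ▸ hrf.1
      · exact hc2 x h
    · simp only [List.length_cons]
      omega

lemma path_pairwise {D : Finset (ℕ × ℕ)} {π : List (ℕ × ℕ)} (h : IsPath D π) :
    π.Pairwise (fun p q => p.1 < q.1 ∧ p.2 ≤ q.2) := by
  haveI : IsTrans (ℕ × ℕ) (fun p q => p.1 < q.1 ∧ p.2 ≤ q.2) :=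
    ⟨fun a b c h1 h2 => ⟨lt_trans h1.1 h2.1, le_trans h1.2 h2.2⟩⟩
  exact List.isChain_iff_pairwise.mp h.2.2

lemma path_nodup {D : Finset (ℕ × ℕ)} {π : List (ℕ × ℕ)} (h : IsPath D π) : π.Nodup :=
  (path_pairwise h).imp (fun hab => by intro he; subst he; omega)

lemma length_le_flatten_length : ∀ (L : List (List (ℕ × ℕ))), (∀ l ∈ L, l ≠ []) →
    L.length ≤ L.flatten.length := by
  intro L
  induction L with
  | nil => simp
  | cons a L IH =>
    intro h
    have ha : a ≠ [] := h a (by simp)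
    have : 1 ≤ a.length := List.length_pos_iff.mpr ha
    have := IH (fun l hl => h l (by simp [hl]))
    simp only [List.flatten_cons, List.length_append, List.length_cons]
    omega

lemma lvl_le {D : Finset (ℕ × ℕ)} {P : List (List (ℕ × ℕ))} (hP : IsKPath D P)
    {p : ℕ × ℕ} (hp : p ∈ P.flatten.toFinset) : lvl P.flatten.toFinset p ≤ P.length := by
  set S := P.flatten.toFinset with hS
  obtain ⟨c, hc, hcS, hclen⟩ := exists_chain S p.2 p le_rfl hp
  set L := p :: c with hL
  have hLS : ∀ x ∈ L, x ∈ S := by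
    intro x hx
    rcases List.mem_cons.mp hx with h | h
    · exact h ▸ hp
    · exact hcS x h
  have hLpair : L.Pairwise (fun a b => a.1 ≤ b.1 ∧ b.2 < a.2) := by
    haveI : IsTrans (ℕ × ℕ) (fun a b => a.1 ≤ b.1 ∧ b.2 < a.2) :=
      ⟨fun a b c h1 h2 => ⟨le_trans h1.1 h2.1, lt_trans h2.2 h1.2⟩⟩
    exact List.isChain_iff_pairwise.mp hc
  have hnodup : L.Nodup := hLpair.imp (fun hab => by intro he; subst he; omega)
  have hsym : ∀ x ∈ L, ∀ y ∈ L, x ≠ y →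
      (x.1 ≤ y.1 ∧ y.2 < x.2) ∨ (y.1 ≤ x.1 ∧ x.2 < y.2) := by
    have h2 : L.Pairwise (fun a b =>
        (a.1 ≤ b.1 ∧ b.2 < a.2) ∨ (b.1 ≤ a.1 ∧ a.2 < b.2)) := hLpair.imp Or.inl
    intro x hx y hy hxy
    haveI : Std.Symm (fun a b : ℕ × ℕ =>
        (a.1 ≤ b.1 ∧ b.2 < a.2) ∨ (b.1 ≤ a.1 ∧ a.2 < b.2)) := ⟨fun a b h => h.symm⟩
    exact h2.forall hx hy hxy
  set f : ℕ × ℕ → ℕ := fun x => P.findIdx (fun π => decide (x ∈ π)) with hf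
  have hmemP : ∀ x ∈ L, ∃ π ∈ P, x ∈ π := fun x hx =>
    List.mem_flatten.mp (List.mem_toFinset.mp (hLS x hx))
  have hflt : ∀ x ∈ L, f x < P.length := by
    intro x hx
    obtain ⟨π, h1, h2⟩ := hmemP x hx
    exact List.findIdx_lt_length_of_exists ⟨π, h1, by simpa using h2⟩
  have hget : ∀ x ∈ L, ∀ (h : f x < P.length), x ∈ P[f x]'h := by
    intro x hx h
    have := List.findIdx_getElem (p := fun π => decide (x ∈ π)) (xs := P) (w := h)
    simpa using this
  have hcard : L.toFinset.card ≤ (Finset.range P.length).card := by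
    apply Finset.card_le_card_of_injOn f
    · intro a ha
      exact Finset.mem_range.mpr (hflt a (List.mem_toFinset.mp ha))
    · intro a ha b hb hab
      by_contra hne
      have haL : a ∈ L := List.mem_toFinset.mp ha
      have hbL : b ∈ L := List.mem_toFinset.mp hb
      have hfa := hflt a haL
      have hfb := hflt b hbL
      have hga : a ∈ P[f a]'hfa := hget a haL hfa
      have hgb : b ∈ P[f a]'hfa := by
        have h' := hget b hbL hfb
        have heq : P[f a]'hfa = P[f b]'hfb := by congr 1
        rw [heq]; exact h'
      set π := P[f a]'hfa with hπ
      have hπP : π ∈ P := List.getElem_mem _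
      have hpath : IsPath D π := hP.1 π hπP
      have hpp := path_pairwise hpath
      have hπsym : ∀ x ∈ π, ∀ y ∈ π, x ≠ y →
          (x.1 < y.1 ∧ x.2 ≤ y.2) ∨ (y.1 < x.1 ∧ y.2 ≤ x.2) := by
        have h2 : π.Pairwise (fun x y =>
            (x.1 < y.1 ∧ x.2 ≤ y.2) ∨ (y.1 < x.1 ∧ y.2 ≤ x.2)) := hpp.imp Or.inl
        intro x hx y hy hxy
        haveI : Std.Symm (fun x y : ℕ × ℕ =>
            (x.1 < y.1 ∧ x.2 ≤ y.2) ∨ (y.1 < x.1 ∧ y.2 ≤ x.2)) := ⟨fun a b h => h.symm⟩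
        exact h2.forall hx hy hxy
      rcases hsym a haL b hbL hne with h | h <;>
        rcases hπsym a hga b hgb hne with h' | h' <;> omega
  have h1 : L.toFinset.card = L.length := List.toFinset_card_of_nodup hnodup
  have h2 : (Finset.range P.length).card = P.length := Finset.card_range _
  have h3 : L.length = lvl S p := by simp only [hL, List.length_cons]; omega
  omega

lemma splitPath (D : Finset (ℕ × ℕ)) :
    ∀ (m : ℕ) (π : List (ℕ × ℕ)), IsPath D π → 1 ≤ m → m ≤ π.length →
    ∃ R : List (List (ℕ × ℕ)), (∀ ρ ∈ R, IsPath D ρ) ∧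
      R.Pairwise (fun ρ σ => Prec (supp ρ) (supp σ)) ∧ R.length = m ∧ R.flatten.Perm π := by
  intro m
  induction m with
  | zero => intro π _ h1 _; omega
  | succ m IH =>
    intro π hπ _ h2
    rcases Nat.eq_zero_or_pos m with hm | hm
    · subst hm
      exact ⟨[π], by simpa using hπ, by simp, by simp, by simp⟩
    have hne : π ≠ [] := hπ.1
    set p := π.getLast hne with hp
    have heq : π.dropLast ++ [p] = π := List.dropLast_append_getLast hne
    have hdl : π.dropLast.length = π.length - 1 := List.length_dropLast
    have hlen2 : 2 ≤ π.length := by omega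
    have hpairs : π.Pairwise (fun a b => a.1 < b.1 ∧ a.2 ≤ b.2) := path_pairwise hπ
    have hpairs2 : (π.dropLast ++ [p]).Pairwise (fun a b => a.1 < b.1 ∧ a.2 ≤ b.2) := by
      rw [heq]; exact hpairs
    have hcross : ∀ q ∈ π.dropLast, q.1 < p.1 ∧ q.2 ≤ p.2 := by
      intro q hq
      exact (List.pairwise_append.mp hpairs2).2.2 q hq p (by simp)
    have hdlpath : IsPath D π.dropLast := by
      refine ⟨?_, ?_, ?_⟩
      · intro h
        rw [h] at hdl
        simp at hdl
        omega
      · intro q hq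
        exact hπ.2.1 q ((List.dropLast_sublist π).subset hq)
      · exact (hpairs.sublist (List.dropLast_sublist π)).isChain
    obtain ⟨R', hR1, hR2, hR3, hR4⟩ := IH π.dropLast hdlpath hm (by omega)
    refine ⟨[p] :: R', ?_, ?_, by simp [hR3], ?_⟩
    · intro ρ hρ
      rcases List.mem_cons.mp hρ with h | h
      · subst h
        exact ⟨by simp, by intro q hq; simp at hq; subst hq; exact hπ.2.1 p (List.getLast_mem hne),
          List.IsChain.singleton _⟩
      · exact hR1 ρ h
    · rw [List.pairwise_cons]
      refine ⟨?_, hR2⟩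
      intro ρ hρ x hx q hq hle
      have hxp : x = p := by simpa [supp] using hx
      have hqd : q ∈ π.dropLast := by
        have : q ∈ R'.flatten := List.mem_flatten.mpr ⟨ρ, hρ, hq⟩
        exact hR4.mem_iff.mp this
      have := hcross q hqd
      subst hxp
      omega
    · simp only [List.flatten_cons, List.singleton_append]
      refine (hR4.cons p).trans ?_
      exact ((List.perm_append_singleton p π.dropLast).symm).trans (by rw [heq])

lemma splitAll (D : Finset (ℕ × ℕ)) :
    ∀ (Q : List (List (ℕ × ℕ))) (k : ℕ), (∀ π ∈ Q, IsPath D π) →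
    Q.Pairwise (fun π ρ => Prec (supp π) (supp ρ)) →
    Q.length ≤ k → k ≤ Q.flatten.length →
    ∃ Q' : List (List (ℕ × ℕ)), (∀ π ∈ Q', IsPath D π) ∧
      Q'.Pairwise (fun π ρ => Prec (supp π) (supp ρ)) ∧ Q'.length = k ∧
      Q'.flatten.Perm Q.flatten := by
  intro Q
  induction Q with
  | nil =>
    intro k _ _ h1 h2
    simp at h2
    subst h2
    exact ⟨[], by simp, by simp, rfl, by simp⟩
  | cons π T IH =>
    intro k hpaths hpair hk1 hk2
    have hπ : IsPath D π := hpaths π (by simp)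
    have hπlen : 1 ≤ π.length := List.length_pos_iff.mpr hπ.1
    have hTlen : T.length ≤ T.flatten.length :=
      length_le_flatten_length T (fun l hl => (hpaths l (by simp [hl])).1)
    have hQlen : (π :: T).flatten.length = π.length + T.flatten.length := by
      simp [List.flatten_cons]
    simp only [List.length_cons] at hk1
    set m := min π.length (k - T.length) with hm
    have hm1 : 1 ≤ m := by omega
    have hm2 : m ≤ π.length := min_le_left _ _
    obtain ⟨R, hR1, hR2, hR3, hR4⟩ := splitPath D m π hπ hm1 hm2
    have hT1 : T.length ≤ k - m := by omega
    have hT2 : k - m ≤ T.flatten.length := by omega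
    obtain ⟨T', hT'1, hT'2, hT'3, hT'4⟩ := IH (k - m)
      (fun ρ hρ => hpaths ρ (by simp [hρ])) (List.pairwise_cons.mp hpair).2 hT1 hT2
    refine ⟨R ++ T', ?_, ?_, ?_, ?_⟩
    · intro ρ hρ
      rcases List.mem_append.mp hρ with h | h
      · exact hR1 ρ h
      · exact hT'1 ρ h
    · rw [List.pairwise_append]
      refine ⟨hR2, hT'2, ?_⟩
      intro ρ hρ τ hτ
      intro x hx q hq hle
      have hxπ : x ∈ π := hR4.mem_iff.mp (List.mem_flatten.mpr ⟨ρ, hρ, hx⟩)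
      have hqT : q ∈ T.flatten := hT'4.mem_iff.mp (List.mem_flatten.mpr ⟨τ, hτ, hq⟩)
      obtain ⟨σ, hσ, hqσ⟩ := List.mem_flatten.mp hqT
      exact (List.pairwise_cons.mp hpair).1 σ hσ x hxπ q hqσ hle
    · simp only [List.length_append, hR3, hT'3]
      omega
    · simp only [List.flatten_append, List.flatten_cons]
      exact hR4.append hT'4

/-- The `i`-th level class, sorted by row. -/
noncomputable def classList (S : Finset (ℕ × ℕ)) (i : ℕ) : List (ℕ × ℕ) :=
  ((S.filter (fun p => lvl S p = i)).toList).mergeSort (fun p q => decide (p.1 ≤ q.1))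

lemma mem_classList {S : Finset (ℕ × ℕ)} {i : ℕ} {x : ℕ × ℕ} :
    x ∈ classList S i ↔ x ∈ S ∧ lvl S x = i := by
  unfold classList
  rw [(List.mergeSort_perm _ _).mem_iff, Finset.mem_toList, Finset.mem_filter]

lemma classList_nodup (S : Finset (ℕ × ℕ)) (i : ℕ) : (classList S i).Nodup :=
  ((List.mergeSort_perm _ _).nodup_iff).mpr (Finset.nodup_toList _)

lemma classList_sorted (S : Finset (ℕ × ℕ)) (i : ℕ) :
    (classList S i).Pairwise (fun p q => p.1 ≤ q.1) := by
  have h := List.pairwise_mergeSort (le := fun p q : ℕ × ℕ => decide (p.1 ≤ q.1))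
    (by intro a b c h1 h2; simp at h1 h2 ⊢; omega)
    (by intro a b; simp; omega)
    ((S.filter (fun p => lvl S p = i)).toList)
  exact h.imp (fun h => by simpa using h)

lemma classList_path {D S : Finset (ℕ × ℕ)} {i : ℕ} (hSD : ∀ p ∈ S, p ∈ D)
    (hne : ∃ q ∈ S, lvl S q = i) : IsPath D (classList S i) := by
  obtain ⟨q, hq, hlq⟩ := hne
  refine ⟨List.ne_nil_of_mem (mem_classList.mpr ⟨hq, hlq⟩), ?_, ?_⟩
  · intro p hp
    exact hSD p (mem_classList.mp hp).1
  · apply List.Pairwise.isChain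
    have hcomb := (classList_sorted S i).and (classList_nodup S i)
    refine hcomb.imp_of_mem ?_
    intro a b ha hb hab
    obtain ⟨haS, hla⟩ := mem_classList.mp ha
    obtain ⟨hbS, hlb⟩ := mem_classList.mp hb
    obtain ⟨hle, hne'⟩ := hab
    have hc1 : a.2 ≤ b.2 := by
      by_contra h
      push_neg at h
      have := lvl_lt hbS hle h
      omega
    have hc2 : a.1 < b.1 := by
      rcases lt_or_eq_of_le hle with h | h
      · exact h
      · exfalso
        have h2 : a.2 ≠ b.2 := by
          intro h2
          exact hne' (Prod.ext h h2)
        have h3 : a.2 < b.2 := lt_of_le_of_ne hc1 h2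
        have := lvl_lt haS (le_of_eq h.symm) h3
        omega
    exact ⟨hc2, hc1⟩

lemma prec_classList {S : Finset (ℕ × ℕ)} {i j : ℕ} (hij : i < j) :
    Prec (supp (classList S i)) (supp (classList S j)) := by
  intro p hp q hq hle
  obtain ⟨hpS, hlp⟩ := mem_classList.mp hp
  obtain ⟨hqS, hlq⟩ := mem_classList.mp hq
  by_contra h
  push_neg at h
  have := lvl_mono (S := S) hle h
  omega

end Stmt8Aux

open Stmt8Aux

/-- Theorem 2.14: every `k`-path (`k ≥ 1`) in a diagram `D` is equivalent to an
ordered `k`-path in `D` (same support). -/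
theorem stmt_8 (D : Finset (ℕ × ℕ)) (hD : D.Nonempty) (k : ℕ) (hk : 1 ≤ k)
    (P : List (List (ℕ × ℕ))) (hP : IsKPath D P) (hlen : P.length = k) :
    ∃ Q : List (List (ℕ × ℕ)), IsOrderedKPath D Q ∧ Q.length = k ∧
      Q.flatten.toFinset = P.flatten.toFinset := by
  classical
  set S := P.flatten.toFinset with hS
  have hSD : ∀ p ∈ S, p ∈ D := by
    intro p hp
    obtain ⟨π, hπ, hpπ⟩ := List.mem_flatten.mp (List.mem_toFinset.mp hp)
    exact (hP.1 π hπ).2.1 p hpπ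
  have hPflat_nodup : P.flatten.Nodup :=
    List.nodup_flatten.mpr ⟨fun l hl => path_nodup (hP.1 l hl), hP.2⟩
  have hScard : k ≤ S.card := by
    rw [hS, List.toFinset_card_of_nodup hPflat_nodup]
    have := length_le_flatten_length P (fun l hl => (hP.1 l hl).1)
    omega
  have hSne : S.Nonempty := Finset.card_pos.mp (by omega)
  set M := S.sup (lvl S) with hM
  obtain ⟨p₀, hp₀, hsup₀⟩ := Finset.exists_mem_eq_sup S hSne (lvl S)
  have hMk : M ≤ k := by
    rw [hM, hsup₀, ← hlen]
    exact lvl_le hP hp₀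
  have hM1 : 1 ≤ M := le_trans (lvl_pos S p₀) (Finset.le_sup hp₀)
  set Q₀ := (List.range M).map (fun j => classList S (j + 1)) with hQ₀
  have attained : ∀ j < M, ∃ q ∈ S, lvl S q = j + 1 := by
    intro j hj
    exact exists_lvl_eq S (j + 1) (by omega) p₀.2 p₀ le_rfl hp₀ (by omega)
  have hQ₀paths : ∀ π ∈ Q₀, IsPath D π := by
    intro π hπ
    obtain ⟨j, hj, rfl⟩ := List.mem_map.mp hπ
    exact classList_path hSD (attained j (List.mem_range.mp hj))
  have hQ₀pair : Q₀.Pairwise (fun π ρ => Prec (supp π) (supp ρ)) := by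
    rw [hQ₀, List.pairwise_map]
    exact (List.pairwise_lt_range (n := M)).imp (fun hij => prec_classList (by omega))
  have hQ₀mem : ∀ x, x ∈ Q₀.flatten ↔ x ∈ S := by
    intro x
    constructor
    · intro hx
      obtain ⟨l, hl, hxl⟩ := List.mem_flatten.mp hx
      obtain ⟨j, _, rfl⟩ := List.mem_map.mp hl
      exact (mem_classList.mp hxl).1
    · intro hx
      have h1 : 1 ≤ lvl S x := lvl_pos S x
      have h2 : lvl S x ≤ M := Finset.le_sup hx
      refine List.mem_flatten.mpr ⟨classList S (lvl S x), ?_, mem_classList.mpr ⟨hx, rfl⟩⟩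
      exact List.mem_map.mpr ⟨lvl S x - 1, List.mem_range.mpr (by omega), by congr 1; omega⟩
  have hQ₀nodup : Q₀.flatten.Nodup := by
    refine List.nodup_flatten.mpr ⟨?_, ?_⟩
    · intro l hl
      obtain ⟨j, _, rfl⟩ := List.mem_map.mp hl
      exact classList_nodup S (j + 1)
    · rw [hQ₀, List.pairwise_map]
      refine (List.pairwise_lt_range (n := M)).imp ?_
      intro i j hij x hx hx'
      have h1 := (mem_classList.mp hx).2
      have h2 := (mem_classList.mp hx').2
      omega
  have hQ₀len : Q₀.flatten.length = S.card := by
    rw [← List.toFinset_card_of_nodup hQ₀nodup]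
    congr 1
    ext x
    rw [List.mem_toFinset]
    exact hQ₀mem x
  have hQ₀length : Q₀.length = M := by simp [hQ₀]
  obtain ⟨Q', h1, h2, h3, h4⟩ := splitAll D Q₀ k hQ₀paths hQ₀pair (by omega) (by omega)
  refine ⟨Q', ⟨⟨h1, ?_⟩, h2⟩, h3, ?_⟩
  · refine h2.imp ?_
    intro π ρ hprec p hp hpρ
    exact absurd (hprec p hp p hpρ le_rfl) (lt_irrefl _)
  · rw [List.toFinset_eq_of_perm _ _ h4]
    ext x
    rw [List.mem_toFinset, hQ₀mem x, hS, List.mem_toFinset]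
end

section
/- Let $\Pi = (\pi_1, \ldots, \pi_k)$ be an ordered $k$-path in a diagram $D$ and let $(a',b')$ be a node of $D$ not in the support of $\Pi$. If some constituent path $\pi_j$ contains two nodes $(a_1, b')$ and $(a_2, b')$ with $a_1 < a' < a_2$, then replacing $\pi_j$ by the path with support $s(\pi_j) \cup \{(a',b')\}$ yields again an ordered $k$-path. -/
/-- Lemma 3.3(i): if `(a',b')` is a node of `D` outside the support of the ordered
`k`-path `P`, and some constituent path `P.get j` contains nodes `(a₁,b')`,
`(a₂,b')` with `a₁ < a' < a₂`, then replacing that path by the path whose support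
is `s(π_j) ∪ {(a',b')}` again yields an ordered `k`-path. -/
theorem stmt_9 (D : Finset (ℕ × ℕ)) (P : List (List (ℕ × ℕ)))
    (hP : IsOrderedKPath D P)
    (a' b' : ℕ) (hmem : (a', b') ∈ D) (hnot : (a', b') ∉ P.flatten)
    (j : ℕ) (hj : j < P.length)
    (h2 : ∃ a₁ a₂ : ℕ, (a₁, b') ∈ P.get ⟨j, hj⟩ ∧ (a₂, b') ∈ P.get ⟨j, hj⟩ ∧
      a₁ < a' ∧ a' < a₂) :
    ∃ π' : List (ℕ × ℕ), IsPath D π' ∧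
      π'.toFinset = (P.get ⟨j, hj⟩).toFinset ∪ {(a', b')} ∧
      IsOrderedKPath D (P.set j π') := by
  classical
  obtain ⟨a₁, a₂, ha1, ha2, hlt1, hlt2⟩ := h2
  obtain ⟨⟨hpaths, hdisj⟩, hprec⟩ := hP
  set R : ℕ × ℕ → ℕ × ℕ → Prop := fun p q => p.1 < q.1 ∧ p.2 ≤ q.2 with hR
  have htrans : IsTrans (ℕ × ℕ) R := ⟨fun p q r h1 h2 => ⟨h1.1.trans h2.1, h1.2.trans h2.2⟩⟩
  set π : List (ℕ × ℕ) := P.get ⟨j, hj⟩ with hπdef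
  have hπP : π ∈ P := List.get_mem _ _
  obtain ⟨hne, hD, hchain⟩ := hpaths π hπP
  have hpw : π.Pairwise R := List.isChain_iff_pairwise.mp hchain
  -- monotonicity across the whole list
  have hmono : ∀ p ∈ π, ∀ q ∈ π, p.1 < q.1 → p.2 ≤ q.2 := by
    have hpw' : π.Pairwise (fun p q : ℕ × ℕ =>
        (p.1 < q.1 → p.2 ≤ q.2) ∧ (q.1 < p.1 → q.2 ≤ p.2)) := by
      refine hpw.imp ?_
      intro p q hpq
      exact ⟨fun _ => hpq.2, fun h => absurd hpq.1 (lt_asymm h)⟩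
    intro p hp q hq hlt
    have hne' : p ≠ q := fun h => by simp [h] at hlt
    exact (have : Std.Symm (fun p q : ℕ × ℕ => (p.1 < q.1 → p.2 ≤ q.2) ∧ (q.1 < p.1 → q.2 ≤ p.2)) := ⟨fun p q h => ⟨h.2, h.1⟩⟩; hpw'.forall hp hq hne').1 hlt
  -- no node of π has row a'
  have hrow : ∀ x ∈ π, x.1 ≠ a' := by
    intro x hx heq
    have hb1 : b' ≤ x.2 := hmono _ ha1 _ hx (by simpa [heq] using hlt1)
    have hb2 : x.2 ≤ b' := hmono _ hx _ ha2 (by simpa [heq] using hlt2)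
    have : x = (a', b') := Prod.ext heq (le_antisymm hb2 hb1)
    exact hnot (List.mem_flatten.mpr ⟨π, hπP, this ▸ hx⟩)
  set π' : List (ℕ × ℕ) :=
    π.filter (fun p => p.1 < a') ++ (a', b') :: π.filter (fun p => a' < p.1) with hπ'
  have hmem' : ∀ x, x ∈ π' ↔ x ∈ π ∨ x = (a', b') := by
    intro x
    simp only [hπ', List.mem_append, List.mem_cons, List.mem_filter, decide_eq_true_iff]
    constructor
    · rintro ((⟨hx, _⟩) | (h | ⟨hx, _⟩))
      · exact Or.inl hx
      · exact Or.inr h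
      · exact Or.inl hx
    · rintro (hx | rfl)
      · rcases lt_or_gt_of_ne (hrow x hx) with h | h
        · exact Or.inl ⟨hx, h⟩
        · exact Or.inr (Or.inr ⟨hx, h⟩)
      · exact Or.inr (Or.inl rfl)
  have hb'new : (a', b') ∉ π := fun h => hnot (List.mem_flatten.mpr ⟨π, hπP, h⟩)
  -- pairwise for π'
  have hpw' : π'.Pairwise R := by
    rw [hπ', List.pairwise_append]
    refine ⟨hpw.sublist (List.filter_sublist), ?_, ?_⟩
    · rw [List.pairwise_cons]
      refine ⟨?_, hpw.sublist (List.filter_sublist)⟩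
      intro q hq
      rw [List.mem_filter, decide_eq_true_iff] at hq
      exact ⟨hq.2, hmono _ ha1 _ hq.1 (hlt1.trans hq.2)⟩
    · intro p hp q hq
      rw [List.mem_filter, decide_eq_true_iff] at hp
      rcases List.mem_cons.mp hq with rfl | hq
      · exact ⟨hp.2, hmono p hp.1 (a₂, b') ha2 (hp.2.trans hlt2)⟩
      · rw [List.mem_filter, decide_eq_true_iff] at hq
        exact ⟨hp.2.trans hq.2, hmono _ hp.1 _ hq.1 (hp.2.trans hq.2)⟩
  have hπ'path : IsPath D π' := by
    refine ⟨by simp [hπ'], ?_, List.isChain_iff_pairwise.mpr hpw'⟩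
    intro p hp
    rcases (hmem' p).mp hp with h | rfl
    · exact hD p h
    · exact hmem
  refine ⟨π', hπ'path, ?_, ?_⟩
  · ext p
    simp only [List.mem_toFinset, Finset.mem_union, Finset.mem_singleton, hmem' p]
  · have hlen : (P.set j π').length = P.length := by simp
    have hget : ∀ (i : ℕ) (hi : i < P.length),
        (P.set j π').get ⟨i, by simpa using hi⟩ = if i = j then π' else P.get ⟨i, hi⟩ := by
      intro i hi
      by_cases h : i = j
      · subst h; simp
      · rw [if_neg h]
        simp only [List.get_eq_getElem]
        exact List.getElem_set_ne (fun hh => h hh.symm) _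
    have hdisj' := List.pairwise_iff_get.mp hdisj
    have hprec' := List.pairwise_iff_get.mp hprec
    have hnotall : ∀ (i : ℕ) (hi : i < P.length), (a', b') ∉ P.get ⟨i, hi⟩ := by
      intro i hi h
      exact hnot (List.mem_flatten.mpr ⟨P.get ⟨i, hi⟩, List.get_mem _ _, h⟩)
    refine ⟨⟨?_, ?_⟩, ?_⟩
    · intro ρ hρ
      rcases List.mem_or_eq_of_mem_set hρ with h | rfl
      · exact hpaths ρ h
      · exact hπ'path
    · rw [List.pairwise_iff_get]
      intro i₁ i₂ h12
      have h₁ : (i₁ : ℕ) < P.length := by have := i₁.2; simpa using this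
      have h₂ : (i₂ : ℕ) < P.length := by have := i₂.2; simpa using this
      have e₁ : (P.set j π').get i₁ = if (i₁ : ℕ) = j then π' else P.get ⟨i₁, h₁⟩ :=
        hget i₁ h₁
      have e₂ : (P.set j π').get i₂ = if (i₂ : ℕ) = j then π' else P.get ⟨i₂, h₂⟩ :=
        hget i₂ h₂
      rw [e₁, e₂]
      have h12' : (i₁ : ℕ) < (i₂ : ℕ) := h12
      by_cases hc₁ : (i₁ : ℕ) = j
      · have hc₂ : (i₂ : ℕ) ≠ j := by omega
        simp only [hc₁, if_pos rfl, if_neg hc₂]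
        intro p hp
        rcases (hmem' p).mp hp with h | rfl
        · exact hdisj' ⟨j, hj⟩ ⟨i₂, h₂⟩ (by simpa [← hc₁] using h12') p h
        · exact hnotall i₂ h₂
      · simp only [if_neg hc₁]
        by_cases hc₂ : (i₂ : ℕ) = j
        · simp only [if_pos hc₂]
          intro p hp hp'
          rcases (hmem' p).mp hp' with h | rfl
          · exact hdisj' ⟨i₁, h₁⟩ ⟨j, hj⟩ (by simpa [← hc₂] using h12') p hp h
          · exact hnotall i₁ h₁ hp
        · simp only [if_neg hc₂]
          exact hdisj' ⟨i₁, h₁⟩ ⟨i₂, h₂⟩ h12'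
    · rw [List.pairwise_iff_get]
      intro i₁ i₂ h12
      have h₁ : (i₁ : ℕ) < P.length := by have := i₁.2; simpa using this
      have h₂ : (i₂ : ℕ) < P.length := by have := i₂.2; simpa using this
      have e₁ : (P.set j π').get i₁ = if (i₁ : ℕ) = j then π' else P.get ⟨i₁, h₁⟩ :=
        hget i₁ h₁
      have e₂ : (P.set j π').get i₂ = if (i₂ : ℕ) = j then π' else P.get ⟨i₂, h₂⟩ :=
        hget i₂ h₂
      rw [e₁, e₂]
      have h12' : (i₁ : ℕ) < (i₂ : ℕ) := h12
      by_cases hc₁ : (i₁ : ℕ) = j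
      · have hc₂ : (i₂ : ℕ) ≠ j := by omega
        simp only [hc₁, if_pos rfl, if_neg hc₂]
        have hold : Prec (supp π) (supp (P.get ⟨i₂, h₂⟩)) :=
          hprec' ⟨j, hj⟩ ⟨i₂, h₂⟩ (by simpa [← hc₁] using h12')
        intro p hp q hq hle
        rcases (hmem' p).mp hp with h | rfl
        · exact hold p h q hq hle
        · exact hold (a₁, b') ha1 q hq (le_of_lt (lt_of_lt_of_le hlt1 hle))
      · simp only [if_neg hc₁]
        by_cases hc₂ : (i₂ : ℕ) = j
        · simp only [if_pos hc₂]
          have hold : Prec (supp (P.get ⟨i₁, h₁⟩)) (supp π) :=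
            hprec' ⟨i₁, h₁⟩ ⟨j, hj⟩ (by simpa [← hc₂] using h12')
          intro p hp q hq hle
          rcases (hmem' q).mp hq with h | rfl
          · exact hold p hp q h hle
          · exact hold p hp (a₂, b') ha2 (le_of_lt (lt_of_le_of_lt hle hlt2))
        · simp only [if_neg hc₂]
          exact hprec' ⟨i₁, h₁⟩ ⟨i₂, h₂⟩ h12'
end

section
/- Let $\Pi = (\pi_1, \ldots, \pi_k)$ be an ordered $k$-path in a diagram $D$ and let $(a',b')$ be a node of $D$ not in the support of $\Pi$. If no constituent path $\pi_j$ contains two nodes $(a_1, b')$ and $(a_2, b')$ with $a_1 < a' < a_2$, then the length-one path $\pi'$ with support $\{(a',b')\}$ can be inserted at some position into $\Pi$ so that the resulting $(k+1)$-path $(\pi_1, \ldots, \pi_{k'}, \pi', \pi_{k'+1}, \ldots, \pi_k)$ is ordered. -/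
/-- Dichotomy: a path avoiding `(a',b')` with no straddling pair in column `b'`
either entirely precedes `(a',b')` or entirely follows it. -/
lemma dichotomy (a' b' : ℕ) (π : List (ℕ × ℕ))
    (hchain : π.Chain' (fun p q => p.1 < q.1 ∧ p.2 ≤ q.2))
    (hx : (a', b') ∉ π)
    (h2 : ¬ ∃ a₁ a₂ : ℕ, (a₁, b') ∈ π ∧ (a₂, b') ∈ π ∧ a₁ < a' ∧ a' < a₂) :
    (∀ p ∈ π, p.1 ≤ a' → p.2 < b') ∨ (∀ p ∈ π, a' ≤ p.1 → b' < p.2) := by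
  by_contra hcon
  push_neg at hcon
  obtain ⟨⟨p, hp, hpa, hpb⟩, q, hq, hqa, hqb⟩ := hcon
  -- pairwise trichotomy on π
  have : IsTrans (ℕ × ℕ) (fun p q : ℕ × ℕ => p.1 < q.1 ∧ p.2 ≤ q.2) :=
    ⟨fun a b c hab hbc => ⟨hab.1.trans hbc.1, hab.2.trans hbc.2⟩⟩
  have hpw : π.Pairwise (fun p q : ℕ × ℕ => p.1 < q.1 ∧ p.2 ≤ q.2) :=
    List.isChain_iff_pairwise.mp hchain
  have hpw' : π.Pairwise (fun p q : ℕ × ℕ =>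
      (p.1 < q.1 ∧ p.2 ≤ q.2) ∨ (q.1 < p.1 ∧ q.2 ≤ p.2)) :=
    hpw.imp Or.inl
  have hsym : Symmetric (fun p q : ℕ × ℕ =>
      (p.1 < q.1 ∧ p.2 ≤ q.2) ∨ (q.1 < p.1 ∧ q.2 ≤ p.2)) := by
    intro a b h; tauto
  rcases eq_or_ne p q with rfl | hne
  · -- p.1 ≤ a' ≤ p.1 and b' ≤ p.2 ≤ b'
    have h1 : p.1 = a' := le_antisymm hpa hqa
    have h3 : p.2 = b' := le_antisymm hqb hpb
    exact hx (by rw [← h1, ← h3]; exact hp)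
  · rcases (haveI : Std.Symm (fun p q : ℕ × ℕ =>
        (p.1 < q.1 ∧ p.2 ≤ q.2) ∨ (q.1 < p.1 ∧ q.2 ≤ p.2)) := ⟨hsym⟩; hpw'.forall hp hq hne) with ⟨h1, h3⟩ | ⟨h1, h3⟩
    · -- p before q : b' ≤ p.2 ≤ q.2 ≤ b'
      have hp2 : p.2 = b' := le_antisymm (h3.trans hqb) hpb
      have hq2 : q.2 = b' := le_antisymm hqb (hpb.trans h3)
      have hpa' : p.1 < a' := lt_of_le_of_ne hpa (by
        rintro rfl; exact hx (by rw [← hp2]; exact hp))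
      have hqa' : a' < q.1 := lt_of_le_of_ne hqa (by
        rintro h; exact hx (by rw [h, ← hq2]; exact hq))
      exact h2 ⟨p.1, q.1, by simpa [← hp2] using hp, by simpa [← hq2] using hq, hpa', hqa'⟩
    · -- q before p : q.1 < p.1 ≤ a' ≤ q.1
      exact absurd (hpa.trans hqa) (not_le.mpr h1)

lemma dropWhile_head_false {α} (p : α → Bool) :
    ∀ (l : List α) {a : α} {t : List α}, l.dropWhile p = a :: t → p a = false := by
  intro l
  induction l with
  | nil => simp
  | cons b l ih =>
    intro a t h
    rw [List.dropWhile_cons] at h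
    by_cases hb : p b
    · simp [hb] at h; exact ih h
    · simp [hb] at h; simp [← h.1, hb]

/-- Lemma 3.3(ii): if `(a',b')` is a node of `D` outside the support of the ordered
`k`-path `P`, and no constituent path contains nodes `(a₁,b')`, `(a₂,b')` with
`a₁ < a' < a₂`, then the length-one path `[(a',b')]` may be inserted at some
position `k'` of `P` so that the resulting `(k+1)`-path is ordered. -/
theorem stmt_10 (D : Finset (ℕ × ℕ)) (P : List (List (ℕ × ℕ)))
    (hP : IsOrderedKPath D P)
    (a' b' : ℕ) (hmem : (a', b') ∈ D) (hnot : (a', b') ∉ P.flatten)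
    (h2 : ∀ π ∈ P, ¬ ∃ a₁ a₂ : ℕ, (a₁, b') ∈ π ∧ (a₂, b') ∈ π ∧ a₁ < a' ∧ a' < a₂) :
    ∃ k' ≤ P.length,
      IsOrderedKPath D (P.take k' ++ [(a', b')] :: P.drop k') := by
  classical
  obtain ⟨⟨hpaths, hdisj⟩, hord⟩ := hP
  set x : ℕ × ℕ := (a', b') with hxdef
  set q : List (ℕ × ℕ) → Bool := fun π => π.all fun p => decide (p.1 ≤ a' → p.2 < b')
    with hqdef
  set A := P.takeWhile q with hA
  set B := P.dropWhile q with hB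
  have hAB : A ++ B = P := List.takeWhile_append_dropWhile (p := q) (l := P)
  have hxnot : ∀ π ∈ P, x ∉ π := by
    intro π hπ hxπ
    exact hnot (List.mem_flatten.mpr ⟨π, hπ, hxπ⟩)
  -- Q π ↔ q π = true
  have hQiff : ∀ π : List (ℕ × ℕ), q π = true ↔ ∀ p ∈ π, p.1 ≤ a' → p.2 < b' := by
    intro π
    simp only [hqdef, List.all_eq_true, decide_eq_true_eq]
  -- everything in A precedes x
  have hAprec : ∀ π ∈ A, Prec (supp π) (supp [x]) := by
    intro π hπ p hp r hr hle
    have := (hQiff π).mp (List.mem_takeWhile_imp hπ)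
    simp only [supp, Set.mem_setOf_eq, List.mem_singleton] at hp hr
    subst hr
    exact this p hp hle
  -- x precedes everything in B
  have hxBprec : ∀ π ∈ B, Prec (supp [x]) (supp π) := by
    have key : ∀ π ∈ B, ∀ p ∈ π, a' ≤ p.1 → b' < p.2 := by
      cases hB' : B with
      | nil => simp [hB']
      | cons ρ B' =>
        -- head fails q
        have hρP : ρ ∈ P := by rw [← hAB, hB']; simp
        have hρfail : ¬ (∀ p ∈ ρ, p.1 ≤ a' → p.2 < b') := by
          intro hQ
          have hd : List.dropWhile q P = ρ :: B' := hB.symm.trans hB'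
          have := dropWhile_head_false q P hd
          rw [(hQiff ρ).mpr hQ] at this
          exact absurd this (by simp)
        have hρafter : ∀ p ∈ ρ, a' ≤ p.1 → b' < p.2 := by
          rcases dichotomy a' b' ρ (hpaths ρ hρP).2.2 (hxnot ρ hρP) (h2 ρ hρP) with h | h
          · exact absurd h hρfail
          · exact h
        intro π hπ p hp hle
        rcases List.mem_cons.mp hπ with rfl | hπ'
        · exact hρafter p hp hle
        · -- π comes after ρ in P, use Prec ρ π and failure of q ρ
          by_contra hcon
          push_neg at hcon
          -- get a node of ρ with row ≤ a' and col ≥ b'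
          push_neg at hρfail
          obtain ⟨r, hr, hra, hrb⟩ := hρfail
          have hρπ : Prec (supp ρ) (supp π) := by
            have : P.Pairwise (fun π ρ => Prec (supp π) (supp ρ)) := hord
            rw [← hAB, hB'] at this
            have := (List.pairwise_append.mp this).2.1
            exact (List.pairwise_cons.mp this).1 π hπ'
          have := hρπ r hr p hp (hra.trans hle)
          omega
    intro π hπ r hr p hp hle
    simp only [supp, Set.mem_setOf_eq, List.mem_singleton] at hr hp
    subst hr
    exact key π hπ p hp hle
  refine ⟨A.length, ?_, ?_⟩
  · rw [← hAB]; simp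
  rw [← hAB, List.take_left, List.drop_left]
  have hmemP : ∀ π ∈ A ++ [x] :: B, π ∈ P ∨ π = [x] := by
    intro π hπ
    rcases List.mem_append.mp hπ with h | h
    · left; rw [← hAB]; exact List.mem_append.mpr (Or.inl h)
    · rcases List.mem_cons.mp h with rfl | h
      · right; rfl
      · left; rw [← hAB]; exact List.mem_append.mpr (Or.inr h)
  have hdisj' := hdisj; rw [← hAB, List.pairwise_append] at hdisj'
  have hord' := hord; rw [← hAB, List.pairwise_append] at hord'
  refine ⟨⟨?_, ?_⟩, ?_⟩
  · -- all paths
    intro π hπ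
    rcases hmemP π hπ with h | rfl
    · exact hpaths π h
    · exact ⟨by simp, by simpa using hmem, List.isChain_singleton _⟩
  · -- pairwise disjoint
    rw [List.pairwise_append]
    refine ⟨hdisj'.1, ?_, ?_⟩
    · rw [List.pairwise_cons]
      refine ⟨?_, hdisj'.2.1⟩
      intro ρ hρ p hp hpρ
      simp only [List.mem_singleton] at hp; subst hp
      exact hxnot ρ (by rw [← hAB]; exact List.mem_append.mpr (Or.inr hρ)) hpρ
    · intro π hπ ρ hρ
      rcases List.mem_cons.mp hρ with rfl | hρ'
      · intro p hp hpx
        simp only [List.mem_singleton] at hpx; subst hpx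
        exact hxnot π (by rw [← hAB]; exact List.mem_append.mpr (Or.inl hπ)) hp
      · exact hdisj'.2.2 π hπ ρ hρ'
  · -- pairwise ordered
    rw [List.pairwise_append]
    refine ⟨hord'.1, ?_, ?_⟩
    · rw [List.pairwise_cons]
      exact ⟨fun ρ hρ => hxBprec ρ hρ, hord'.2.1⟩
    · intro π hπ ρ hρ
      rcases List.mem_cons.mp hρ with rfl | hρ'
      · exact hAprec π hπ
      · exact hord'.2.2 π hπ ρ hρ'
end

section
/- Let $D \subseteq \mathbb{N}^2$ be a diagram of size $n$ and let $u \in S_n$ be such that filling $D$ row-by-row with $1,\ldots,n$ and then applying $u$ to the entries produces a standard $D$-tableau. If $\ell(u s_k) = \ell(u) - 1$ for some adjacent transposition $s_k = (k, k+1)$, then in this tableau the entry $k+1$ lies strictly north-east of the entry $k$ (strictly smaller row index and strictly larger column index), and the tableau obtained by swapping $k$ and $k+1$ is again standard. -/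
/-- The number of inversions of a permutation of `Fin n`; this equals the Coxeter
length of the permutation with respect to the adjacent transpositions. -/
def invCount (n : ℕ) (u : Equiv.Perm (Fin n)) : ℕ :=
  (Finset.univ.filter (fun p : Fin n × Fin n => p.1 < p.2 ∧ u p.2 < u p.1)).card

private lemma swap_lt_iff' (n k : ℕ) (hk : k + 1 < n) (i j : Fin n) :
    Equiv.swap (⟨k, Nat.lt_of_succ_lt hk⟩ : Fin n) ⟨k+1, hk⟩ j
      < Equiv.swap (⟨k, Nat.lt_of_succ_lt hk⟩ : Fin n) ⟨k+1, hk⟩ i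
    ↔ ((j < i ∧ ¬(j = (⟨k, Nat.lt_of_succ_lt hk⟩ : Fin n) ∧ i = (⟨k+1, hk⟩ : Fin n)))
        ∨ (i = (⟨k, Nat.lt_of_succ_lt hk⟩ : Fin n) ∧ j = (⟨k+1, hk⟩ : Fin n))) := by
  simp only [Equiv.swap_apply_def, Fin.lt_def, Fin.ext_iff]
  split_ifs <;> simp_all [Fin.ext_iff] <;> omega

/-- Lemma 3.1(i): `D` a diagram of size `n`, `tRow` the row-filling tableau `t^D`
(characterized by increasing along the row-reading order), `u ∈ Sₙ` with `t^D u`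
standard.  If `ℓ(u s_k) = ℓ(u) - 1` (the permutation obtained by further swapping
the entries `k`, `k+1` of the row-form has one fewer inversion), then the entry
`k+1` is strictly north-east of the entry `k` in `t^D u`, and swapping the entries
`k` and `k+1` yields again a standard `D`-tableau.  (Entries are 0-indexed.) -/
theorem stmt_11 (n : ℕ) (D : Finset (ℕ × ℕ)) (hcard : D.card = n)
    (tRow : {x // x ∈ D} ≃ Fin n)
    (hRow : ∀ p q : {x // x ∈ D},
      tRow p < tRow q ↔ (p.1.1 < q.1.1 ∨ (p.1.1 = q.1.1 ∧ p.1.2 < q.1.2)))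
    (u : Equiv.Perm (Fin n))
    (hstd : ∀ p q : {x // x ∈ D},
      p.1.1 ≤ q.1.1 → p.1.2 ≤ q.1.2 → u (tRow p) ≤ u (tRow q))
    (k : ℕ) (hk : k + 1 < n)
    (hlen : invCount n
        (Equiv.swap (⟨k, Nat.lt_of_succ_lt hk⟩ : Fin n) ⟨k + 1, hk⟩ * u) + 1 =
      invCount n u) :
    (∃ p q : {x // x ∈ D},
      u (tRow p) = (⟨k, Nat.lt_of_succ_lt hk⟩ : Fin n) ∧
      u (tRow q) = (⟨k + 1, hk⟩ : Fin n) ∧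
      q.1.1 < p.1.1 ∧ p.1.2 < q.1.2) ∧
    (∀ p q : {x // x ∈ D}, p.1.1 ≤ q.1.1 → p.1.2 ≤ q.1.2 →
      (Equiv.swap (⟨k, Nat.lt_of_succ_lt hk⟩ : Fin n) ⟨k + 1, hk⟩ * u) (tRow p) ≤
      (Equiv.swap (⟨k, Nat.lt_of_succ_lt hk⟩ : Fin n) ⟨k + 1, hk⟩ * u) (tRow q)) := by
  set ka : Fin n := ⟨k, Nat.lt_of_succ_lt hk⟩ with hka
  set kb : Fin n := ⟨k + 1, hk⟩ with hkb
  have hkakb : ka < kb := by simp [hka, hkb, Fin.lt_def]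
  set a : Fin n := u.symm ka with haa
  set b : Fin n := u.symm kb with hbb
  have hua : u a = ka := u.apply_symm_apply ka
  have hub : u b = kb := u.apply_symm_apply kb
  have hainj : ∀ x : Fin n, u x = ka ↔ x = a := by
    intro x; constructor
    · intro h; rw [haa, ← h, Equiv.symm_apply_apply]
    · rintro rfl; exact hua
  have hbinj : ∀ x : Fin n, u x = kb ↔ x = b := by
    intro x; constructor
    · intro h; rw [hbb, ← h, Equiv.symm_apply_apply]
    · rintro rfl; exact hub
  -- Step 1: b < a
  have hba : b < a := by
    by_contra hab
    have hne : a ≠ b := by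
      intro h; rw [haa, hbb] at h; exact absurd (u.symm.injective h) (ne_of_lt hkakb)
    have hab' : a < b := lt_of_le_of_ne (le_of_not_gt hab) hne
    have key : (Finset.univ.filter
        (fun p : Fin n × Fin n => p.1 < p.2 ∧ (Equiv.swap ka kb * u) p.2 < (Equiv.swap ka kb * u) p.1))
        = insert (a, b)
          (Finset.univ.filter (fun p : Fin n × Fin n => p.1 < p.2 ∧ u p.2 < u p.1)) := by
      ext ⟨p, q⟩
      simp only [Finset.mem_filter, Finset.mem_insert, Finset.mem_univ, true_and,
        Prod.mk.injEq]
      simp only [Equiv.Perm.mul_apply]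
      rw [swap_lt_iff' n k hk (u p) (u q), hainj, hbinj, hainj, hbinj]
      constructor
      · rintro ⟨hpq, (⟨h1, _⟩ | ⟨h1, h2⟩)⟩
        · exact Or.inr ⟨hpq, h1⟩
        · exact Or.inl ⟨h1, h2⟩
      · rintro (⟨rfl, rfl⟩ | ⟨hpq, h1⟩)
        · exact ⟨hab', Or.inr ⟨rfl, rfl⟩⟩
        · refine ⟨hpq, Or.inl ⟨h1, ?_⟩⟩
          rintro ⟨rfl, rfl⟩
          exact absurd hpq (not_lt.mpr (le_of_lt hab'))
    have hnotmem : (a, b) ∉ (Finset.univ.filter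
        (fun p : Fin n × Fin n => p.1 < p.2 ∧ u p.2 < u p.1)) := by
      simp only [Finset.mem_filter, Finset.mem_univ, true_and, not_and]
      intro _
      rw [hua, hub]
      exact not_lt.mpr (le_of_lt hkakb)
    have := hlen
    rw [invCount, invCount, key, Finset.card_insert_of_notMem hnotmem] at this
    omega
  -- the cells carrying k and k+1
  set P : {x // x ∈ D} := tRow.symm a with hP
  set Q : {x // x ∈ D} := tRow.symm b with hQ
  have htP : tRow P = a := tRow.apply_symm_apply a
  have htQ : tRow Q = b := tRow.apply_symm_apply b
  have huP : u (tRow P) = ka := by rw [htP, hua]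
  have huQ : u (tRow Q) = kb := by rw [htQ, hub]
  have hQP : tRow Q < tRow P := by rw [htP, htQ]; exact hba
  have hQP' := (hRow Q P).mp hQP
  -- Q is strictly north of P
  have hrow : Q.1.1 < P.1.1 := by
    rcases hQP' with h | ⟨h1, h2⟩
    · exact h
    · exfalso
      have := hstd Q P (le_of_eq h1) (le_of_lt h2)
      rw [huP, huQ] at this
      exact absurd this (not_le.mpr hkakb)
  have hcol : P.1.2 < Q.1.2 := by
    by_contra hc
    have := hstd Q P (le_of_lt hrow) (le_of_not_gt hc)
    rw [huP, huQ] at this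
    exact absurd this (not_le.mpr hkakb)
  refine ⟨⟨P, Q, huP, huQ, hrow, hcol⟩, ?_⟩
  -- Step 2: standardness after the swap
  intro p q hr hc
  have h1 : u (tRow p) ≤ u (tRow q) := hstd p q hr hc
  by_contra hlt
  have hlt' : (Equiv.swap ka kb * u) (tRow q) < (Equiv.swap ka kb * u) (tRow p) :=
    lt_of_not_ge hlt
  simp only [Equiv.Perm.mul_apply] at hlt'
  rcases (swap_lt_iff' n k hk (u (tRow p)) (u (tRow q))).mp hlt' with ⟨h2, _⟩ | ⟨h2, h3⟩
  · exact absurd h1 (not_le.mpr h2)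
  · -- then p = P, q = Q, contradicting rows
    have hpP : p = P := by
      have := (hainj (tRow p)).mp h2
      rw [hP, ← this, Equiv.symm_apply_apply]
    have hqQ : q = Q := by
      have := (hbinj (tRow q)).mp h3
      rw [hQ, ← this, Equiv.symm_apply_apply]
    rw [hpP, hqQ] at hr
    exact absurd hr (not_le.mpr hrow)
end

section
/- Let $D$ be a diagram of size $n$, let $t^D$ be the row-filling tableau, and let $w_D \in S_n$ be defined by $t^D w_D = t_D$ where $t_D$ is the column-filling tableau. Define $\Psi_D = \{\epsilon_l - \epsilon_m : l \ne m, \text{ and } m \text{ is weakly south-east of } l \text{ in } t^D\}$ (i.e., the node of $m$ has row and column index both $\ge$ those of the node of $l$). Then $\Psi_D = N^+(w_D)$, where $N^+(w) = \{\epsilon_i - \epsilon_j \in \Phi^+ : \epsilon_{iw} - \epsilon_{jw} \in \Phi^+\}$ with $\Phi^+ = \{\epsilon_i - \epsilon_j : 1 \le i < j \le n\}$. -/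
/-- Lemma 3.2(i) (`Ψ_D = N⁺(w_D)`).  Roots `ε_l - ε_m` (`l ≠ m`) are encoded as
ordered pairs `(l, m)` of elements of `Fin n`.  `tRow` is the row-filling tableau
`t^D`, `tCol` the column-filling tableau `t_D`, and `w_D` is the permutation with
`t^D w_D = t_D`.  Then the set `Ψ_D` of roots `ε_l - ε_m` such that `l ≠ m` and the
node of `m` is weakly south-east of the node of `l` in `t^D` equals
`N⁺(w_D) = {ε_i - ε_j ∈ Φ⁺ : (ε_i - ε_j) w_D ∈ Φ⁺}`. -/
theorem stmt_12 (n : ℕ) (D : Finset (ℕ × ℕ)) (hcard : D.card = n)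
    (tRow tCol : {x // x ∈ D} ≃ Fin n)
    (hRow : ∀ p q : {x // x ∈ D},
      tRow p < tRow q ↔ (p.1.1 < q.1.1 ∨ (p.1.1 = q.1.1 ∧ p.1.2 < q.1.2)))
    (hCol : ∀ p q : {x // x ∈ D},
      tCol p < tCol q ↔ (p.1.2 < q.1.2 ∨ (p.1.2 = q.1.2 ∧ p.1.1 < q.1.1)))
    (wD : Equiv.Perm (Fin n)) (hw : ∀ p : {x // x ∈ D}, wD (tRow p) = tCol p) :
    {lm : Fin n × Fin n | lm.1 ≠ lm.2 ∧
        ∃ p q : {x // x ∈ D}, tRow p = lm.1 ∧ tRow q = lm.2 ∧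
          p.1.1 ≤ q.1.1 ∧ p.1.2 ≤ q.1.2} =
      {lm : Fin n × Fin n | lm.1 < lm.2 ∧ wD lm.1 < wD lm.2} := by
  ext lm
  obtain ⟨l, m⟩ := lm
  simp only [Set.mem_setOf_eq, ne_eq]
  constructor
  · rintro ⟨hne, p, q, hp, hq, h1, h2⟩
    have hpq : p ≠ q := by rintro rfl; exact hne (hp.symm.trans hq)
    have hpq' : p.1 ≠ q.1 := fun h => hpq (Subtype.ext h)
    have hlt : tRow p < tRow q := by
      rw [hRow]
      rcases lt_or_eq_of_le h1 with h | h
      · exact Or.inl h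
      · refine Or.inr ⟨h, lt_of_le_of_ne h2 ?_⟩
        intro h2e
        exact hpq' (Prod.ext h h2e)
    have hlt2 : tCol p < tCol q := by
      rw [hCol]
      rcases lt_or_eq_of_le h2 with h | h
      · exact Or.inl h
      · refine Or.inr ⟨h, lt_of_le_of_ne h1 ?_⟩
        intro h1e
        exact hpq' (Prod.ext h1e h)
    subst hp hq
    exact ⟨hlt, by rw [hw, hw]; exact hlt2⟩
  · rintro ⟨hlt, hwlt⟩
    refine ⟨ne_of_lt hlt, tRow.symm l, tRow.symm m, tRow.apply_symm_apply l,
      tRow.apply_symm_apply m, ?_, ?_⟩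
    · have h1 := (hRow (tRow.symm l) (tRow.symm m)).mp (by simpa using hlt)
      rcases h1 with h | ⟨h, _⟩
      · exact le_of_lt h
      · exact le_of_eq h
    · have h2 := (hCol (tRow.symm l) (tRow.symm m)).mp (by
        rw [← hw, ← hw]; simpa using hwlt)
      rcases h2 with h | ⟨h, _⟩
      · exact le_of_lt h
      · exact le_of_eq h
end

section
/- Let $D$ be a diagram of size $n$ and $u \in S_n$ such that $t^D u$ is a standard $D$-tableau. If $u \ne w_D$, then there exists $k$ with $1 \le k \le n-1$ such that $N^-(u) \subsetneq N^-(u s_k) \subseteq N^-(w_D)$ and $t^D u s_k$ is again a standard $D$-tableau. Consequently, the map $u \mapsto t^D u$ is a bijection from the set of prefixes of $w_D$ (elements $x$ such that $w_D$ has a reduced expression beginning with a reduced expression for $x$) onto the set of standard $D$-tableaux. -/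
/-- `N⁻(u)`: the set of positive roots `ε_i - ε_j` (`i < j`, encoded as pairs)
sent to negative roots by `u`. -/
def Nminus (n : ℕ) (u : Equiv.Perm (Fin n)) : Finset (Fin n × Fin n) :=
  Finset.univ.filter (fun p : Fin n × Fin n => p.1 < p.2 ∧ u p.2 < u p.1)

/-- `g` is an adjacent transposition `s_k = (k, k+1)`. -/
def IsAdjSwap (n : ℕ) (g : Equiv.Perm (Fin n)) : Prop :=
  ∃ (k : ℕ) (hk : k + 1 < n),
    g = Equiv.swap (⟨k, Nat.lt_of_succ_lt hk⟩ : Fin n) ⟨k + 1, hk⟩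

/-- Product of a word of generators in the symmetric group acting on the right:
`s_{a₁} s_{a₂} ⋯ s_{a_m}` corresponds to composition in the reverse order. -/
def wprod (n : ℕ) (L : List (Equiv.Perm (Fin n))) : Equiv.Perm (Fin n) :=
  L.reverse.prod

/-- `x` is a prefix of `y`: some reduced word for `y` begins with a reduced word
for `x`. -/
def IsPrefixOf (n : ℕ) (x y : Equiv.Perm (Fin n)) : Prop :=
  ∃ L M : List (Equiv.Perm (Fin n)), (∀ g ∈ L ++ M, IsAdjSwap n g) ∧
    wprod n L = x ∧ wprod n (L ++ M) = y ∧
    L.length = invCount n x ∧ (L ++ M).length = invCount n y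

section Helpers
variable {n : ℕ}

lemma mem_Nminus {u : Equiv.Perm (Fin n)} {p : Fin n × Fin n} :
    p ∈ Nminus n u ↔ p.1 < p.2 ∧ u p.2 < u p.1 := by
  simp [Nminus]

lemma invCount_eq_card (u : Equiv.Perm (Fin n)) : invCount n u = (Nminus n u).card := rfl

lemma invCount_one : invCount n 1 = 0 := by
  rw [invCount, Finset.card_eq_zero, Finset.filter_eq_empty_iff]
  rintro ⟨x, y⟩ -
  simp only [Equiv.Perm.one_apply, not_and]
  intro h
  exact asymm h

lemma swap_lt_iff {a b x y : Fin n} (hab : (a : ℕ) + 1 = b)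
    (h1 : ¬(x = a ∧ y = b)) (h2 : ¬(x = b ∧ y = a)) :
    Equiv.swap a b x < Equiv.swap a b y ↔ x < y := by
  have H : ∀ u v : Fin n, (u = v) ↔ ((u : ℕ) = v) := fun u v => Fin.ext_iff
  simp only [H] at h1 h2
  simp only [Equiv.swap_apply_def, Fin.lt_def, H]
  split_ifs <;> omega

lemma mem_Nminus_swap {a b : Fin n} (hab : (a : ℕ) + 1 = b) (u : Equiv.Perm (Fin n))
    (x y : Fin n) :
    (x, y) ∈ Nminus n (Equiv.swap a b * u) ↔
      x < y ∧ ((x, y) = (u.symm a, u.symm b) ∨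
        (¬((x, y) = (u.symm b, u.symm a)) ∧ u y < u x)) := by
  have hab' : a < b := by rw [Fin.lt_def]; omega
  have hne : a ≠ b := ne_of_lt hab'
  rw [mem_Nminus]
  simp only [Equiv.Perm.mul_apply]
  refine and_congr_right fun _ => ?_
  by_cases hc1 : u x = a ∧ u y = b
  · obtain ⟨p1, p2⟩ := hc1
    rw [p1, p2, Equiv.swap_apply_left, Equiv.swap_apply_right]
    refine iff_of_true hab' (Or.inl ?_)
    rw [Prod.mk.injEq]
    exact ⟨(Equiv.eq_symm_apply u).2 p1, (Equiv.eq_symm_apply u).2 p2⟩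
  · by_cases hc2 : u x = b ∧ u y = a
    · obtain ⟨p1, p2⟩ := hc2
      rw [p1, p2, Equiv.swap_apply_left, Equiv.swap_apply_right]
      refine iff_of_false (asymm hab') ?_
      rintro (hq | ⟨hq, -⟩)
      · rw [Prod.mk.injEq] at hq
        exact hc1 ⟨((Equiv.eq_symm_apply u).1 hq.1), ((Equiv.eq_symm_apply u).1 hq.2)⟩
      · apply hq
        rw [Prod.mk.injEq]
        exact ⟨(Equiv.eq_symm_apply u).2 p1, (Equiv.eq_symm_apply u).2 p2⟩
    · rw [swap_lt_iff hab (fun h => hc2 ⟨h.2, h.1⟩) (fun h => hc1 ⟨h.2, h.1⟩)]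
      constructor
      · intro h
        refine Or.inr ⟨?_, h⟩
        intro hq
        rw [Prod.mk.injEq] at hq
        exact hc2 ⟨((Equiv.eq_symm_apply u).1 hq.1), ((Equiv.eq_symm_apply u).1 hq.2)⟩
      · rintro (hq | ⟨-, hq⟩)
        · rw [Prod.mk.injEq] at hq
          exact absurd ⟨((Equiv.eq_symm_apply u).1 hq.1), ((Equiv.eq_symm_apply u).1 hq.2)⟩ hc1
        · exact hq

lemma Nminus_swap_of_lt {a b : Fin n} (hab : (a : ℕ) + 1 = b) (u : Equiv.Perm (Fin n))
    (hlt : u.symm a < u.symm b) :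
    Nminus n (Equiv.swap a b * u) = insert (u.symm a, u.symm b) (Nminus n u) := by
  ext ⟨x, y⟩
  rw [mem_Nminus_swap hab, Finset.mem_insert, mem_Nminus]
  constructor
  · rintro ⟨hxy, h | ⟨hne, hinv⟩⟩
    · exact Or.inl h
    · exact Or.inr ⟨hxy, hinv⟩
  · rintro (h | ⟨hxy, hinv⟩)
    · rw [Prod.mk.injEq] at h
      obtain ⟨hx, hy⟩ := h
      subst hx; subst hy
      exact ⟨hlt, Or.inl rfl⟩
    · refine ⟨hxy, Or.inr ⟨?_, hinv⟩⟩
      intro hcon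
      rw [Prod.mk.injEq] at hcon
      obtain ⟨hx, hy⟩ := hcon
      subst hx; subst hy
      exact absurd hlt (asymm hxy)

lemma Nminus_swap_of_gt {a b : Fin n} (hab : (a : ℕ) + 1 = b) (u : Equiv.Perm (Fin n))
    (hlt : u.symm b < u.symm a) :
    Nminus n (Equiv.swap a b * u) = (Nminus n u).erase (u.symm b, u.symm a) := by
  ext ⟨x, y⟩
  rw [mem_Nminus_swap hab, Finset.mem_erase, mem_Nminus]
  constructor
  · rintro ⟨hxy, h | ⟨hne, hinv⟩⟩
    · exfalso
      rw [Prod.mk.injEq] at h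
      obtain ⟨hx, hy⟩ := h
      subst hx; subst hy
      exact absurd hlt (asymm hxy)
    · exact ⟨hne, hxy, hinv⟩
  · rintro ⟨hne, hxy, hinv⟩
    exact ⟨hxy, Or.inr ⟨hne, hinv⟩⟩

lemma swap_step {g : Equiv.Perm (Fin n)} (hg : IsAdjSwap n g) (u : Equiv.Perm (Fin n)) :
    (invCount n (g * u) = invCount n u + 1 ∧ Nminus n u ⊆ Nminus n (g * u)) ∨
      invCount n u = invCount n (g * u) + 1 := by
  obtain ⟨k, hk, rfl⟩ := hg
  set a : Fin n := ⟨k, Nat.lt_of_succ_lt hk⟩ with ha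
  set b : Fin n := ⟨k + 1, hk⟩ with hb
  have hab : (a : ℕ) + 1 = b := rfl
  have hab' : a < b := by rw [Fin.lt_def]; omega
  have hne : u.symm a ≠ u.symm b := fun h => absurd (u.symm.injective h) (ne_of_lt hab')
  rcases hne.lt_or_gt with hlt | hlt
  · left
    rw [invCount_eq_card, invCount_eq_card, Nminus_swap_of_lt hab u hlt]
    have hnm : (u.symm a, u.symm b) ∉ Nminus n u := by
      rw [mem_Nminus]
      simp only [Equiv.apply_symm_apply]
      exact fun h => absurd hab' (asymm h.2)
    rw [Finset.card_insert_of_notMem hnm]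
    exact ⟨rfl, Finset.subset_insert _ _⟩
  · right
    rw [invCount_eq_card, invCount_eq_card, Nminus_swap_of_gt hab u hlt]
    have hm : (u.symm b, u.symm a) ∈ Nminus n u := by
      rw [mem_Nminus]
      simp only [Equiv.apply_symm_apply]
      exact ⟨hlt, hab'⟩
    rw [Finset.card_erase_of_mem hm]
    have := Finset.card_pos.2 ⟨_, hm⟩
    omega
end Helpers

section Words
variable {n : ℕ}

lemma wprod_nil : wprod n [] = 1 := rfl

lemma wprod_append (L M : List (Equiv.Perm (Fin n))) :
    wprod n (L ++ M) = wprod n M * wprod n L := by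
  simp [wprod, List.reverse_append]

lemma wprod_concat (L : List (Equiv.Perm (Fin n))) (g : Equiv.Perm (Fin n)) :
    wprod n (L ++ [g]) = g * wprod n L := by
  rw [wprod_append]
  simp [wprod]

lemma invCount_wprod_le (W : List (Equiv.Perm (Fin n))) (h : ∀ g ∈ W, IsAdjSwap n g) :
    invCount n (wprod n W) ≤ W.length := by
  induction W using List.reverseRecOn with
  | nil => rw [wprod_nil]; simp [invCount_one]
  | append_singleton W g ih =>
    rw [wprod_concat]
    have hg : IsAdjSwap n g := h g (by simp)
    have hb := ih (fun x hx => h x (by simp [hx]))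
    rcases swap_step hg (wprod n W) with ⟨heq, -⟩ | heq <;> simp <;> omega

lemma nminus_prefix (L M : List (Equiv.Perm (Fin n)))
    (hall : ∀ g ∈ L ++ M, IsAdjSwap n g)
    (hred : invCount n (wprod n (L ++ M)) = (L ++ M).length) :
    Nminus n (wprod n L) ⊆ Nminus n (wprod n (L ++ M)) ∧
      invCount n (wprod n L) = L.length := by
  induction M using List.reverseRecOn with
  | nil => simpa using hred
  | append_singleton M g ih =>
    have hcat : L ++ (M ++ [g]) = (L ++ M) ++ [g] := (List.append_assoc _ _ _).symm
    rw [hcat, wprod_concat] at hred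
    have hg : IsAdjSwap n g := hall g (by simp)
    have hall' : ∀ x ∈ L ++ M, IsAdjSwap n x := fun x hx => hall x (by
      rw [hcat]; exact List.mem_append_left _ hx)
    have hb := invCount_wprod_le (L ++ M) hall'
    rcases swap_step hg (wprod n (L ++ M)) with ⟨heq, hsub⟩ | heq
    · have hred' : invCount n (wprod n (L ++ M)) = (L ++ M).length := by
        simp at hred ⊢; omega
      obtain ⟨ih1, ih2⟩ := ih hall' hred'
      refine ⟨?_, ih2⟩
      rw [hcat, wprod_concat]
      exact ih1.trans hsub
    · exfalso
      simp at hred hb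
      omega

lemma strictMono_of_consec (f : Fin n → Fin n)
    (h : ∀ (k : ℕ) (hk : k + 1 < n),
      f ⟨k, Nat.lt_of_succ_lt hk⟩ < f ⟨k + 1, hk⟩) : StrictMono f := by
  have key : ∀ (d : ℕ) (x y : Fin n), (y : ℕ) = x + d + 1 → f x < f y := by
    intro d
    induction d with
    | zero =>
      intro x y hy
      have hk : (x : ℕ) + 1 < n := by have := y.isLt; omega
      have := h x hk
      have hx : (⟨(x : ℕ), Nat.lt_of_succ_lt hk⟩ : Fin n) = x := rfl
      have hyy : y = ⟨(x : ℕ) + 1, hk⟩ := Fin.ext (by simpa using hy)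
      rw [hx] at this
      rw [hyy]
      exact this
    | succ d ih =>
      intro x y hy
      have hm : (x : ℕ) + d + 1 < n := by have := y.isLt; omega
      have h1 := ih x ⟨(x : ℕ) + d + 1, hm⟩ rfl
      have h2 := h ((x : ℕ) + d + 1) (by have := y.isLt; omega)
      have hyy : y = ⟨(x : ℕ) + d + 1 + 1, by have := y.isLt; omega⟩ :=
        Fin.ext (by simpa using (by omega : (y : ℕ) = (x : ℕ) + d + 1 + 1))
      rw [hyy]
      exact h1.trans h2
  intro x y hxy
  exact key ((y : ℕ) - x - 1) x y (by have := Fin.lt_def.1 hxy; omega)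

lemma perm_eq_one_of_strictMono (u : Equiv.Perm (Fin n)) (h : StrictMono (u : Fin n → Fin n)) :
    u = 1 := by
  have he : StrictMono.orderIsoOfSurjective (u : Fin n → Fin n) h u.surjective =
      OrderIso.refl (Fin n) := Subsingleton.elim _ _
  ext x
  have h2 : u x = x := by
    have := congrArg (fun e : Fin n ≃o Fin n => e x) he
    simpa [StrictMono.coe_orderIsoOfSurjective] using this
  exact congrArg Fin.val h2

lemma exists_reduced_word (N : ℕ) :
    ∀ u : Equiv.Perm (Fin n), invCount n u ≤ N →
      ∃ L : List (Equiv.Perm (Fin n)), (∀ g ∈ L, IsAdjSwap n g) ∧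
        wprod n L = u ∧ L.length = invCount n u := by
  induction N with
  | zero =>
    intro u hu
    have h0 : invCount n u = 0 := Nat.le_zero.1 hu
    have hempty : Nminus n u = ∅ := Finset.card_eq_zero.1 h0
    have hmono : StrictMono (u : Fin n → Fin n) := by
      intro x y hxy
      rcases lt_trichotomy (u x) (u y) with h | h | h
      · exact h
      · exact absurd (u.injective h) (ne_of_lt hxy)
      · exfalso
        have : (x, y) ∈ Nminus n u := mem_Nminus.2 ⟨hxy, h⟩
        rw [hempty] at this
        exact absurd this (Finset.notMem_empty _)
    refine ⟨[], fun g hg => absurd hg List.not_mem_nil, wprod_nil.trans ?_, by simp [h0]⟩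
    exact (perm_eq_one_of_strictMono u hmono).symm
  | succ N ih =>
    intro u hu
    by_cases h0 : invCount n u = 0
    · exact ih u (by omega)
    · -- find a descent
      have hdes : ∃ (k : ℕ) (hk : k + 1 < n),
          u.symm ⟨k + 1, hk⟩ < u.symm ⟨k, Nat.lt_of_succ_lt hk⟩ := by
        by_contra hcon
        push_neg at hcon
        have hmono : StrictMono (u.symm : Fin n → Fin n) := by
          apply strictMono_of_consec
          intro k hk
          have := hcon k hk
          rcases lt_or_eq_of_le this with h | h
          · exact h
          · exfalso
            have := u.symm.injective h
            rw [Fin.ext_iff] at this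
            simp at this
        have : u.symm = 1 := perm_eq_one_of_strictMono u.symm hmono
        have hu1 : u = 1 := by
          ext x
          have h := congrArg (fun e : Equiv.Perm (Fin n) => e (u x)) this
          simp only [Equiv.symm_apply_apply, Equiv.Perm.coe_one, id_eq] at h
          exact congrArg Fin.val h.symm
        rw [hu1, invCount_one] at h0
        exact h0 rfl
      obtain ⟨k, hk, hlt⟩ := hdes
      set a : Fin n := ⟨k, Nat.lt_of_succ_lt hk⟩ with ha
      set b : Fin n := ⟨k + 1, hk⟩ with hb
      set g : Equiv.Perm (Fin n) := Equiv.swap a b with hgdef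
      have hg : IsAdjSwap n g := ⟨k, hk, rfl⟩
      have hstep := swap_step hg u
      have hdec : invCount n u = invCount n (g * u) + 1 := by
        rcases hstep with ⟨heq, hsub⟩ | heq
        · exfalso
          have hab : (a : ℕ) + 1 = b := rfl
          rw [invCount_eq_card, invCount_eq_card,
            Nminus_swap_of_gt hab u hlt] at heq
          have hm : (u.symm b, u.symm a) ∈ Nminus n u := by
            rw [mem_Nminus]
            simp only [Equiv.apply_symm_apply]
            exact ⟨hlt, by rw [Fin.lt_def]; omega⟩
          rw [Finset.card_erase_of_mem hm] at heq
          have := Finset.card_pos.2 ⟨_, hm⟩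
          omega
        · exact heq
      obtain ⟨L, hL1, hL2, hL3⟩ := ih (g * u) (by omega)
      refine ⟨L ++ [g], ?_, ?_, ?_⟩
      · intro x hx
        rcases List.mem_append.1 hx with h | h
        · exact hL1 x h
        · rw [List.mem_singleton.1 h]; exact hg
      · rw [wprod_concat, hL2, hgdef, ← mul_assoc, Equiv.swap_mul_self, one_mul]
      · simp [hL3, hdec]
end Words

section Tableau
variable {n : ℕ} {D : Finset (ℕ × ℕ)}
variable (tRow tCol : {x // x ∈ D} ≃ Fin n) (wD : Equiv.Perm (Fin n))

lemma std_sub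
    (hRow : ∀ p q : {x // x ∈ D},
      tRow p < tRow q ↔ (p.1.1 < q.1.1 ∨ (p.1.1 = q.1.1 ∧ p.1.2 < q.1.2)))
    (hCol : ∀ p q : {x // x ∈ D},
      tCol p < tCol q ↔ (p.1.2 < q.1.2 ∨ (p.1.2 = q.1.2 ∧ p.1.1 < q.1.1)))
    (hw : ∀ p : {x // x ∈ D}, wD (tRow p) = tCol p)
    (u : Equiv.Perm (Fin n))
    (hu : ∀ p q : {x // x ∈ D}, p.1.1 ≤ q.1.1 → p.1.2 ≤ q.1.2 →
      u (tRow p) ≤ u (tRow q)) :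
    Nminus n u ⊆ Nminus n wD := by
  rintro ⟨i, j⟩ hm
  rw [mem_Nminus] at hm ⊢
  obtain ⟨hij, hji⟩ := hm
  refine ⟨hij, ?_⟩
  set p := tRow.symm i with hpdef
  set q := tRow.symm j with hqdef
  have hi : tRow p = i := tRow.apply_symm_apply i
  have hj : tRow q = j := tRow.apply_symm_apply j
  have hrowlt := (hRow p q).1 (by rw [hi, hj]; exact hij)
  have hnc : ¬(p.1.1 ≤ q.1.1 ∧ p.1.2 ≤ q.1.2) := by
    rintro ⟨h1, h2⟩
    have hle := hu p q h1 h2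
    rw [hi, hj] at hle
    exact absurd hji (not_lt.2 hle)
  have hcc : q.1.2 < p.1.2 ∧ p.1.1 < q.1.1 := by
    rcases hrowlt with h | ⟨h1, h2⟩ <;> omega
  have hclt : tCol q < tCol p := (hCol q p).2 (Or.inl hcc.1)
  show wD j < wD i
  rw [← hi, ← hj, hw p, hw q]
  exact hclt

lemma sub_std
    (hRow : ∀ p q : {x // x ∈ D},
      tRow p < tRow q ↔ (p.1.1 < q.1.1 ∨ (p.1.1 = q.1.1 ∧ p.1.2 < q.1.2)))
    (hCol : ∀ p q : {x // x ∈ D},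
      tCol p < tCol q ↔ (p.1.2 < q.1.2 ∨ (p.1.2 = q.1.2 ∧ p.1.1 < q.1.1)))
    (hw : ∀ p : {x // x ∈ D}, wD (tRow p) = tCol p)
    (u : Equiv.Perm (Fin n))
    (hsub : Nminus n u ⊆ Nminus n wD) :
    ∀ p q : {x // x ∈ D}, p.1.1 ≤ q.1.1 → p.1.2 ≤ q.1.2 →
      u (tRow p) ≤ u (tRow q) := by
  intro p q h1 h2
  rcases lt_trichotomy (tRow p) (tRow q) with h | h | h
  · by_contra hlt
    push_neg at hlt
    have hmem : ((tRow p, tRow q) : Fin n × Fin n) ∈ Nminus n u :=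
      mem_Nminus.2 ⟨h, hlt⟩
    have hmem2 := mem_Nminus.1 (hsub hmem)
    have h3 : wD (tRow q) < wD (tRow p) := hmem2.2
    rw [hw p, hw q] at h3
    rw [hCol] at h3
    omega
  · exact le_of_eq (congrArg u h)
  · exfalso
    rw [hRow] at h
    omega

lemma exchange
    (hRow : ∀ p q : {x // x ∈ D},
      tRow p < tRow q ↔ (p.1.1 < q.1.1 ∨ (p.1.1 = q.1.1 ∧ p.1.2 < q.1.2)))
    (hCol : ∀ p q : {x // x ∈ D},
      tCol p < tCol q ↔ (p.1.2 < q.1.2 ∨ (p.1.2 = q.1.2 ∧ p.1.1 < q.1.1)))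
    (hw : ∀ p : {x // x ∈ D}, wD (tRow p) = tCol p)
    (u : Equiv.Perm (Fin n))
    (hu : ∀ p q : {x // x ∈ D}, p.1.1 ≤ q.1.1 → p.1.2 ≤ q.1.2 →
      u (tRow p) ≤ u (tRow q))
    (hne : u ≠ wD) :
    ∃ (k : ℕ) (hk : k + 1 < n),
      Nminus n u ⊂
        Nminus n (Equiv.swap (⟨k, Nat.lt_of_succ_lt hk⟩ : Fin n) ⟨k + 1, hk⟩ * u) ∧
      Nminus n (Equiv.swap (⟨k, Nat.lt_of_succ_lt hk⟩ : Fin n) ⟨k + 1, hk⟩ * u) ⊆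
        Nminus n wD ∧
      (∀ p q : {x // x ∈ D}, p.1.1 ≤ q.1.1 → p.1.2 ≤ q.1.2 →
        (Equiv.swap (⟨k, Nat.lt_of_succ_lt hk⟩ : Fin n) ⟨k + 1, hk⟩ * u) (tRow p) ≤
        (Equiv.swap (⟨k, Nat.lt_of_succ_lt hk⟩ : Fin n) ⟨k + 1, hk⟩ * u) (tRow q)) := by
  have key : ∃ (k : ℕ) (hk : k + 1 < n),
      (tRow.symm (u.symm ⟨k, Nat.lt_of_succ_lt hk⟩)).1.1 <
        (tRow.symm (u.symm ⟨k + 1, hk⟩)).1.1 ∧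
      (tRow.symm (u.symm ⟨k + 1, hk⟩)).1.2 <
        (tRow.symm (u.symm ⟨k, Nat.lt_of_succ_lt hk⟩)).1.2 := by
    by_contra hcon
    push_neg at hcon
    have hmono : StrictMono ((wD * u⁻¹ : Equiv.Perm (Fin n)) : Fin n → Fin n) := by
      apply strictMono_of_consec
      intro k hk
      set a : Fin n := ⟨k, Nat.lt_of_succ_lt hk⟩ with hadef
      set b : Fin n := ⟨k + 1, hk⟩ with hbdef
      have hab' : a < b := by rw [Fin.lt_def]; exact Nat.lt_succ_self k
      set P := tRow.symm (u.symm a) with hPdef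
      set Q := tRow.symm (u.symm b) with hQdef
      have hPa : tRow P = u.symm a := tRow.apply_symm_apply _
      have hQb : tRow Q = u.symm b := tRow.apply_symm_apply _
      have hPu : u (tRow P) = a := by rw [hPa, Equiv.apply_symm_apply]
      have hQu : u (tRow Q) = b := by rw [hQb, Equiv.apply_symm_apply]
      have e1 : (wD * u⁻¹ : Equiv.Perm (Fin n)) a = tCol P := by
        show wD (u.symm a) = tCol P
        rw [← hPa, hw P]
      have e2 : (wD * u⁻¹ : Equiv.Perm (Fin n)) b = tCol Q := by
        show wD (u.symm b) = tCol Q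
        rw [← hQb, hw Q]
      rw [e1, e2]
      have hne' : P ≠ Q := by
        intro h
        have h2 := congrArg (fun z => tRow z) h
        rw [hPa, hQb] at h2
        have hba := u.symm.injective h2
        rw [Fin.ext_iff] at hba
        simp [hadef, hbdef] at hba
      rw [hCol]
      rcases lt_trichotomy P.1.2 Q.1.2 with hcase | hcase | hcase
      · exact Or.inl hcase
      · right
        refine ⟨hcase, ?_⟩
        rcases lt_trichotomy P.1.1 Q.1.1 with hr | hr | hr
        · exact hr
        · exact absurd (Subtype.ext (Prod.ext_iff.2 ⟨hr, hcase⟩)) hne'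
        · exfalso
          have hle := hu Q P (le_of_lt hr) (le_of_eq hcase.symm)
          rw [hPu, hQu] at hle
          exact absurd hle (not_le.2 hab')
      · exfalso
        rcases lt_or_ge P.1.1 Q.1.1 with hr | hr
        · have hc2 := hcon k hk hr
          exact absurd hc2 (not_le.2 hcase)
        · have hle := hu Q P hr (le_of_lt hcase)
          rw [hPu, hQu] at hle
          exact absurd hle (not_le.2 hab')
    have h1 : (wD * u⁻¹ : Equiv.Perm (Fin n)) = 1 := perm_eq_one_of_strictMono _ hmono
    exact hne (mul_inv_eq_one.1 h1).symm
  obtain ⟨k, hk, hrowlt, hcollt⟩ := key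
  set a : Fin n := ⟨k, Nat.lt_of_succ_lt hk⟩ with hadef
  set b : Fin n := ⟨k + 1, hk⟩ with hbdef
  have hab : (a : ℕ) + 1 = b := rfl
  have hab' : a < b := by rw [Fin.lt_def]; exact Nat.lt_succ_self k
  set P := tRow.symm (u.symm a) with hPdef
  set Q := tRow.symm (u.symm b) with hQdef
  have hPa : tRow P = u.symm a := tRow.apply_symm_apply _
  have hQb : tRow Q = u.symm b := tRow.apply_symm_apply _
  have hij : u.symm a < u.symm b := by
    rw [← hPa, ← hQb, hRow]
    exact Or.inl hrowlt
  have hN : Nminus n (Equiv.swap a b * u) = insert (u.symm a, u.symm b) (Nminus n u) :=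
    Nminus_swap_of_lt hab u hij
  have hnm : (u.symm a, u.symm b) ∉ Nminus n u := by
    rw [mem_Nminus]
    simp only [Equiv.apply_symm_apply]
    exact fun h => absurd hab' (asymm h.2)
  have hsubwD : Nminus n (Equiv.swap a b * u) ⊆ Nminus n wD := by
    rw [hN]
    refine Finset.insert_subset ?_ (std_sub tRow tCol wD hRow hCol hw u hu)
    rw [mem_Nminus]
    refine ⟨hij, ?_⟩
    show wD (u.symm b) < wD (u.symm a)
    rw [← hPa, ← hQb, hw P, hw Q]
    exact (hCol Q P).2 (Or.inl hcollt)
  refine ⟨k, hk, ?_, hsubwD, sub_std tRow tCol wD hRow hCol hw _ hsubwD⟩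
  rw [hN]
  exact Finset.ssubset_insert hnm
end Tableau

section Final
variable {n : ℕ} {D : Finset (ℕ × ℕ)}
variable (tRow tCol : {x // x ∈ D} ≃ Fin n) (wD : Equiv.Perm (Fin n))

lemma self_prefix (w : Equiv.Perm (Fin n)) : IsPrefixOf n w w := by
  obtain ⟨L, h1, h2, h3⟩ := exists_reduced_word (invCount n w) w le_rfl
  exact ⟨L, [], by simpa using h1, h2, by simpa using h2, h3, by simpa using h3⟩

lemma standard_prefix
    (hRow : ∀ p q : {x // x ∈ D},
      tRow p < tRow q ↔ (p.1.1 < q.1.1 ∨ (p.1.1 = q.1.1 ∧ p.1.2 < q.1.2)))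
    (hCol : ∀ p q : {x // x ∈ D},
      tCol p < tCol q ↔ (p.1.2 < q.1.2 ∨ (p.1.2 = q.1.2 ∧ p.1.1 < q.1.1)))
    (hw : ∀ p : {x // x ∈ D}, wD (tRow p) = tCol p) :
    ∀ (d : ℕ) (u : Equiv.Perm (Fin n)),
      invCount n wD - invCount n u ≤ d →
      (∀ p q : {x // x ∈ D}, p.1.1 ≤ q.1.1 → p.1.2 ≤ q.1.2 →
        u (tRow p) ≤ u (tRow q)) →
      IsPrefixOf n u wD := by
  intro d
  induction d with
  | zero =>
    intro u hmeas hu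
    by_cases heq : u = wD
    · rw [heq]; exact self_prefix wD
    · exfalso
      obtain ⟨k, hk, hss, hsubwD, -⟩ := exchange tRow tCol wD hRow hCol hw u hu heq
      have h1 : invCount n u <
          invCount n (Equiv.swap (⟨k, Nat.lt_of_succ_lt hk⟩ : Fin n) ⟨k + 1, hk⟩ * u) :=
        Finset.card_lt_card hss
      have h2 : invCount n (Equiv.swap (⟨k, Nat.lt_of_succ_lt hk⟩ : Fin n) ⟨k + 1, hk⟩ * u)
          ≤ invCount n wD := Finset.card_le_card hsubwD
      omega
  | succ d ih =>
    intro u hmeas hu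
    by_cases heq : u = wD
    · rw [heq]; exact self_prefix wD
    · obtain ⟨k, hk, hss, hsubwD, hstd'⟩ := exchange tRow tCol wD hRow hCol hw u hu heq
      set g : Equiv.Perm (Fin n) :=
        Equiv.swap (⟨k, Nat.lt_of_succ_lt hk⟩ : Fin n) ⟨k + 1, hk⟩ with hgdef
      have hg : IsAdjSwap n g := ⟨k, hk, rfl⟩
      have h1 : invCount n u < invCount n (g * u) := Finset.card_lt_card hss
      have h1' : invCount n (g * u) = invCount n u + 1 := by
        rcases swap_step hg u with ⟨h, -⟩ | h
        · exact h
        · omega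
      have h2 : invCount n (g * u) ≤ invCount n wD := Finset.card_le_card hsubwD
      obtain ⟨L', M', hall', hL', hLM', hlen1', hlen2'⟩ :=
        ih (g * u) (by omega) hstd'
      obtain ⟨L, hL1, hL2, hL3⟩ := exists_reduced_word (invCount n u) u le_rfl
      refine ⟨L, g :: M', ?_, hL2, ?_, hL3, ?_⟩
      · intro x hx
        rcases List.mem_append.1 hx with h | h
        · exact hL1 x h
        · rcases List.mem_cons.1 h with h | h
          · rw [h]; exact hg
          · exact hall' x (List.mem_append_right _ h)
      · have hsplit : L ++ g :: M' = (L ++ [g]) ++ M' := by simp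
        rw [hsplit, wprod_append, wprod_concat, hL2, ← hL', ← wprod_append, hLM']
      · have e1 : (L' ++ M').length = L'.length + M'.length := List.length_append
        have e2 : (L ++ g :: M').length = L.length + (M'.length + 1) := by simp
        rw [e2]
        rw [e1] at hlen2'
        rw [hlen1'] at hlen2'
        omega


/-- Lemma 3.2(ii) together with Result 3.3: if `t^D u` is standard and `u ≠ w_D`
then some `s_k` satisfies `N⁻(u) ⊊ N⁻(u s_k) ⊆ N⁻(w_D)` with `t^D u s_k` again
standard; consequently `u ↦ t^D u` is a bijection from the prefixes of `w_D` onto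
the standard `D`-tableaux. -/
theorem stmt_13 (n : ℕ) (D : Finset (ℕ × ℕ)) (hcard : D.card = n)
    (tRow tCol : {x // x ∈ D} ≃ Fin n)
    (hRow : ∀ p q : {x // x ∈ D},
      tRow p < tRow q ↔ (p.1.1 < q.1.1 ∨ (p.1.1 = q.1.1 ∧ p.1.2 < q.1.2)))
    (hCol : ∀ p q : {x // x ∈ D},
      tCol p < tCol q ↔ (p.1.2 < q.1.2 ∨ (p.1.2 = q.1.2 ∧ p.1.1 < q.1.1)))
    (wD : Equiv.Perm (Fin n)) (hw : ∀ p : {x // x ∈ D}, wD (tRow p) = tCol p) :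
    (∀ u : Equiv.Perm (Fin n),
      (∀ p q : {x // x ∈ D}, p.1.1 ≤ q.1.1 → p.1.2 ≤ q.1.2 →
        u (tRow p) ≤ u (tRow q)) → u ≠ wD →
      ∃ (k : ℕ) (hk : k + 1 < n),
        Nminus n u ⊂
          Nminus n (Equiv.swap (⟨k, Nat.lt_of_succ_lt hk⟩ : Fin n) ⟨k + 1, hk⟩ * u) ∧
        Nminus n (Equiv.swap (⟨k, Nat.lt_of_succ_lt hk⟩ : Fin n) ⟨k + 1, hk⟩ * u) ⊆
          Nminus n wD ∧
        (∀ p q : {x // x ∈ D}, p.1.1 ≤ q.1.1 → p.1.2 ≤ q.1.2 →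
          (Equiv.swap (⟨k, Nat.lt_of_succ_lt hk⟩ : Fin n) ⟨k + 1, hk⟩ * u) (tRow p) ≤
          (Equiv.swap (⟨k, Nat.lt_of_succ_lt hk⟩ : Fin n) ⟨k + 1, hk⟩ * u) (tRow q))) ∧
    Set.BijOn (fun u : Equiv.Perm (Fin n) => (fun p : {x // x ∈ D} => u (tRow p)))
      {u | IsPrefixOf n u wD}
      {t : {x // x ∈ D} → Fin n | Function.Bijective t ∧
        ∀ p q : {x // x ∈ D}, p.1.1 ≤ q.1.1 → p.1.2 ≤ q.1.2 → t p ≤ t q} := by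
  constructor
  · intro u hu hne
    exact exchange tRow tCol wD hRow hCol hw u hu hne
  · refine ⟨?_, ?_, ?_⟩
    · -- MapsTo
      intro u hu
      obtain ⟨L, M, hall, hL, hLM, hlenL, hlenLM⟩ := hu
      have hred : invCount n (wprod n (L ++ M)) = (L ++ M).length := by
        rw [hLM, ← hlenLM]
      obtain ⟨hsub0, -⟩ := nminus_prefix L M hall hred
      rw [hL, hLM] at hsub0
      have hstd := sub_std tRow tCol wD hRow hCol hw u
        (hsub0.trans (Finset.Subset.refl _))
      exact ⟨Function.Bijective.comp u.bijective tRow.bijective, hstd⟩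
    · -- InjOn
      intro u _ v _ h
      ext x
      have h2 := congrFun h (tRow.symm x)
      simp only [Equiv.apply_symm_apply] at h2
      exact congrArg Fin.val h2
    · -- SurjOn
      intro t ht
      obtain ⟨htb, hts⟩ := ht
      set u : Equiv.Perm (Fin n) := tRow.symm.trans (Equiv.ofBijective t htb) with hudef
      have hut : ∀ p, u (tRow p) = t p := by
        intro p
        simp [hudef, Equiv.ofBijective]
      have hstd : ∀ p q : {x // x ∈ D}, p.1.1 ≤ q.1.1 → p.1.2 ≤ q.1.2 →
          u (tRow p) ≤ u (tRow q) := by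
        intro p q h1 h2
        rw [hut, hut]
        exact hts p q h1 h2
      refine ⟨u, ?_, ?_⟩
      · exact standard_prefix tRow tCol wD hRow hCol hw (invCount n wD) u (by omega) hstd
      · funext p
        exact hut p
end Final
end

section
/- Let $\lambda$ be a composition of $n$, let $D, E$ be diagrams with row-composition $\lambda$, and let $\theta = \theta_{E,D} : E \to D$ be the natural row-preserving, order-preserving-within-rows bijection. Suppose that $t^E w_D$ is a standard $E$-tableau. Then for every $k$-path $\Pi = (\pi_1, \ldots, \pi_k)$ in $E$, the image $\Pi\theta = (\pi_1\theta, \ldots, \pi_k\theta)$ is a $k$-path in $D$. -/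
private lemma rank_eq {n : ℕ} {S : Finset (ℕ×ℕ)} (e : {x // x ∈ S} ≃ Fin n)
    (r : ℕ×ℕ → ℕ×ℕ → Prop) [DecidableRel r]
    (h : ∀ p q : {x // x ∈ S}, e p < e q ↔ r p.1 q.1) (p : {x // x ∈ S}) :
    (e p : ℕ) = (S.filter (fun q => r q p.1)).card := by
  have : (e p : ℕ) = (Finset.Iio (e p)).card := by simp
  rw [this]
  symm
  apply Finset.card_bij (fun q hq => e ⟨q, (Finset.mem_filter.mp hq).1⟩)
  · intro q hq
    simp only [Finset.mem_Iio]
    exact (h _ _).2 (Finset.mem_filter.mp hq).2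
  · intro a ha b hb hab
    exact congrArg Subtype.val (e.injective hab)
  · intro j hj
    refine ⟨(e.symm j).1, ?_, by simp⟩
    rw [Finset.mem_filter]
    refine ⟨(e.symm j).2, ?_⟩
    apply (h _ _).1
    simpa using Finset.mem_Iio.mp hj

private lemma below_card (S : Finset (ℕ×ℕ)) (m : ℕ) :
    (S.filter (fun q => q.1 < m)).card
      = ∑ i ∈ Finset.range m, (S.filter (fun q => q.1 = i)).card := by
  rw [← Finset.card_biUnion]
  · congr 1
    ext q
    simp only [Finset.mem_filter, Finset.mem_biUnion, Finset.mem_range]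
    constructor
    · rintro ⟨hq, hlt⟩; exact ⟨q.1, hlt, hq, rfl⟩
    · rintro ⟨i, hi, hq, rfl⟩; exact ⟨hq, hi⟩
  · intro a _ b _ hab
    simp only [Finset.disjoint_left, Finset.mem_filter]
    rintro q ⟨_, h1⟩ ⟨_, h2⟩
    exact hab (h1.symm.trans h2)

/-- Proposition 2.3: `D, E` diagrams with the same row-composition `λ`,
`θ = θ_{E,D} : E → D` the natural bijection sending the `l`-th node of the `i`-th
row of `E` to the `l`-th node of the `i`-th row of `D`.  If `t^E w_D` is a standard
`E`-tableau (where `t^E` is the row-filling tableau of `E` and `w_D` satisfies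
`t^D w_D = t_D`), then the image under `θ` of any `k`-path in `E` is a `k`-path
in `D`. -/
theorem stmt_14 (n : ℕ) (D E : Finset (ℕ × ℕ)) (hD : D.card = n) (hE : E.card = n)
    (hrowcomp : ∀ i : ℕ, (E.filter (fun q => q.1 = i)).card =
      (D.filter (fun q => q.1 = i)).card)
    (θ : ℕ × ℕ → ℕ × ℕ) (hθbij : Set.BijOn θ ↑E ↑D)
    (hθrow : ∀ p ∈ E, (θ p).1 = p.1)
    (hθord : ∀ p ∈ E, (E.filter (fun q => q.1 = p.1 ∧ q.2 < p.2)).card =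
      (D.filter (fun q => q.1 = (θ p).1 ∧ q.2 < (θ p).2)).card)
    (tRowE : {x // x ∈ E} ≃ Fin n)
    (hRowE : ∀ p q : {x // x ∈ E},
      tRowE p < tRowE q ↔ (p.1.1 < q.1.1 ∨ (p.1.1 = q.1.1 ∧ p.1.2 < q.1.2)))
    (tRowD tColD : {x // x ∈ D} ≃ Fin n)
    (hRowD : ∀ p q : {x // x ∈ D},
      tRowD p < tRowD q ↔ (p.1.1 < q.1.1 ∨ (p.1.1 = q.1.1 ∧ p.1.2 < q.1.2)))
    (hColD : ∀ p q : {x // x ∈ D},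
      tColD p < tColD q ↔ (p.1.2 < q.1.2 ∨ (p.1.2 = q.1.2 ∧ p.1.1 < q.1.1)))
    (wD : Equiv.Perm (Fin n)) (hw : ∀ p : {x // x ∈ D}, wD (tRowD p) = tColD p)
    (hstd : ∀ p q : {x // x ∈ E}, p.1.1 ≤ q.1.1 → p.1.2 ≤ q.1.2 →
      wD (tRowE p) ≤ wD (tRowE q)) :
    ∀ P : List (List (ℕ × ℕ)), IsKPath E P → IsKPath D (P.map (List.map θ)) := by
  have hmap : ∀ p ∈ E, θ p ∈ D := fun p hp => hθbij.mapsTo hp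
  -- equality of row-reading ranks
  have hrank : ∀ p : {x // x ∈ E}, (tRowE p : ℕ)
      = (tRowD ⟨θ p.1, hmap p.1 p.2⟩ : ℕ) := by
    intro p
    rw [rank_eq tRowE (fun q r => q.1 < r.1 ∨ (q.1 = r.1 ∧ q.2 < r.2)) hRowE p,
        rank_eq tRowD (fun q r => q.1 < r.1 ∨ (q.1 = r.1 ∧ q.2 < r.2)) hRowD _]
    simp only
    rw [Finset.filter_or, Finset.filter_or,
        Finset.card_union_of_disjoint, Finset.card_union_of_disjoint]
    · have h1 : (E.filter (fun q => q.1 < p.1.1)).card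
          = (D.filter (fun q => q.1 < (θ p.1).1)).card := by
        rw [hθrow p.1 p.2, below_card, below_card]
        exact Finset.sum_congr rfl (fun i _ => hrowcomp i)
      have h2 := hθord p.1 p.2
      omega
    · simp only [Finset.disjoint_left, Finset.mem_filter]
      rintro q ⟨_, h⟩ ⟨_, heq, _⟩; omega
    · simp only [Finset.disjoint_left, Finset.mem_filter]
      rintro q ⟨_, h⟩ ⟨_, heq, _⟩; omega
  have hrank' : ∀ p : {x // x ∈ E}, tRowE p = tRowD ⟨θ p.1, hmap p.1 p.2⟩ :=
    fun p => Fin.ext (hrank p)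
  -- key monotonicity lemma
  have key : ∀ p ∈ E, ∀ q ∈ E, p.1 ≤ q.1 → p.2 ≤ q.2 → (θ p).2 ≤ (θ q).2 := by
    intro p hp q hq h1 h2
    have h := hstd ⟨p, hp⟩ ⟨q, hq⟩ h1 h2
    rw [hrank' ⟨p, hp⟩, hrank' ⟨q, hq⟩, hw, hw] at h
    by_contra hcon
    push_neg at hcon
    have : tColD ⟨θ q, hmap q hq⟩ < tColD ⟨θ p, hmap p hp⟩ :=
      (hColD _ _).2 (Or.inl hcon)
    exact absurd h (not_le.mpr this)
  intro P hP
  constructor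
  · intro π hπ
    rw [List.mem_map] at hπ
    obtain ⟨σ, hσP, rfl⟩ := hπ
    obtain ⟨hne, hmem, hch⟩ := hP.1 σ hσP
    refine ⟨by simpa using hne, ?_, ?_⟩
    · intro p hp
      rw [List.mem_map] at hp
      obtain ⟨a, ha, rfl⟩ := hp
      exact hmap a (hmem a ha)
    · simp only [List.Chain'] at hch ⊢
      rw [List.isChain_map]
      rw [List.isChain_iff_getElem] at hch ⊢
      intro i hi
      have h := hch i (by simpa using hi)
      have ha := hmem _ (List.getElem_mem (l := σ) (n := i) (by omega))
      have hb := hmem _ (List.getElem_mem (l := σ) (n := i+1) (by omega))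
      constructor
      · rw [hθrow _ ha, hθrow _ hb]; exact h.1
      · exact key _ ha _ hb (le_of_lt h.1) h.2
  · rw [List.pairwise_map]
    have := hP.2
    refine List.Pairwise.imp_of_mem ?_ this
    intro π ρ hπ hρ hdisj
    intro p hp hpρ
    rw [List.mem_map] at hp hpρ
    obtain ⟨a, ha, rfl⟩ := hp
    obtain ⟨b, hb, hab⟩ := hpρ
    have := hθbij.injOn ((hP.1 ρ hρ).2.1 b hb) ((hP.1 π hπ).2.1 a ha) hab
    exact hdisj a ha (this ▸ hb)
end

section
/- Let $D$ be a diagram with row-composition $\lambda$ and conjugate partition $\lambda' = (\lambda_1', \ldots, \lambda_{r'}')$. For $1 \le u \le r'$, any $u$-path in $D$ of length $\lambda_1' + \cdots + \lambda_u'$ contains all $\lambda_i$ nodes on the $i$-th row of $D$ whenever $\lambda_i \le u$, and exactly $u$ nodes on each row with $\lambda_i > u$. -/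
/-- Number of nodes on row `i` of `D` (the part `λ_i` of the row-composition). -/
def rowCount (D : Finset (ℕ × ℕ)) (i : ℕ) : ℕ :=
  (D.filter (fun q => q.1 = i)).card

/-- The `j`-th part `λ'_j` of the conjugate of the row-composition of `D`:
the number of rows of `D` having at least `j` nodes. -/
def conjRow (D : Finset (ℕ × ℕ)) (j : ℕ) : ℕ :=
  ((D.image Prod.fst).filter (fun i => j ≤ rowCount D i)).card

instance instTransPath : IsTrans (ℕ × ℕ) (fun p q => p.1 < q.1 ∧ p.2 ≤ q.2) :=
  ⟨fun _ _ _ h1 h2 => ⟨h1.1.trans h2.1, h1.2.trans h2.2⟩⟩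

lemma path_countP_le_one (π : List (ℕ × ℕ))
    (h : π.Chain' (fun p q => p.1 < q.1 ∧ p.2 ≤ q.2)) (i : ℕ) :
    π.countP (fun p => p.1 = i) ≤ 1 := by
  rw [List.Chain', List.isChain_iff_pairwise] at h
  have hpw : π.Pairwise (fun p q => p.1 < q.1) := h.imp (fun h => h.1)
  rw [List.countP_eq_length_filter]
  have hf : (π.filter (fun p => p.1 = i)).Pairwise (fun p q => p.1 < q.1) := hpw.filter _
  match hm : π.filter (fun p => p.1 = i) with
  | [] => simp [hm]
  | [a] => simp [hm]
  | a :: b :: t =>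
    exfalso
    have ha : a ∈ π.filter (fun p => p.1 = i) := by rw [hm]; simp
    have hb : b ∈ π.filter (fun p => p.1 = i) := by rw [hm]; simp
    have ha' := List.of_mem_filter ha
    have hb' := List.of_mem_filter hb
    simp only [decide_eq_true_eq] at ha' hb'
    rw [hm] at hf
    have := (List.pairwise_cons.1 hf).1 b (by simp)
    omega

lemma path_nodup (π : List (ℕ × ℕ))
    (h : π.Chain' (fun p q => p.1 < q.1 ∧ p.2 ≤ q.2)) : π.Nodup := by
  rw [List.Chain', List.isChain_iff_pairwise] at h
  exact (h.imp (fun h => h.1)).imp (fun {a b} h he => by simp [he] at h)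

lemma conj_sum (D : Finset (ℕ × ℕ)) (u : ℕ) :
    ∑ j ∈ Finset.Icc 1 u, conjRow D j
      = ∑ i ∈ D.image Prod.fst, min (rowCount D i) u := by
  unfold conjRow
  simp only [Finset.card_filter]
  rw [Finset.sum_comm]
  refine Finset.sum_congr rfl fun i _ => ?_
  rw [← Finset.card_filter]
  have : (Finset.Icc 1 u).filter (fun j => j ≤ rowCount D i)
      = Finset.Icc 1 (min (rowCount D i) u) := by
    ext j; simp [Finset.mem_Icc, Finset.mem_filter]; omega
  rw [this, Nat.card_Icc]
  omega

/-- Result 2.6 (Proposition 3.4 of [MPa17]): a `u`-path in `D` of length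
`λ'_1 + ⋯ + λ'_u` contains all `λ_i` nodes on each row `i` with `λ_i ≤ u`, and
exactly `u` nodes on each row with `λ_i > u`. -/
theorem stmt_15 (D : Finset (ℕ × ℕ)) (u : ℕ) (hu : 1 ≤ u)
    (hur : u ≤ (D.image Prod.fst).sup (rowCount D))
    (P : List (List (ℕ × ℕ))) (hP : IsKPath D P) (hlen : P.length = u)
    (htot : P.flatten.length = ∑ j ∈ Finset.Icc 1 u, conjRow D j) :
    ∀ i ∈ D.image Prod.fst,
      (rowCount D i ≤ u → ∀ p ∈ D, p.1 = i → p ∈ P.flatten) ∧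
      (u < rowCount D i → (P.flatten.toFinset.filter (fun p => p.1 = i)).card = u) := by
  classical
  have hnodup : P.flatten.Nodup := by
    rw [List.nodup_flatten]
    exact ⟨fun π hπ => path_nodup π (hP.1 π hπ).2.2, hP.2⟩
  set S := P.flatten.toFinset with hS
  have hScard : S.card = P.flatten.length := List.toFinset_card_of_nodup hnodup
  have hSD : S ⊆ D := by
    intro p hp
    rw [hS, List.mem_toFinset, List.mem_flatten] at hp
    obtain ⟨π, hπ, hpπ⟩ := hp
    exact (hP.1 π hπ).2.1 p hpπ
  -- f i ≤ min
  have hfle : ∀ i, (S.filter (fun p => p.1 = i)).card ≤ min (rowCount D i) u := by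
    intro i
    refine le_min ?_ ?_
    · apply Finset.card_le_card
      intro p hp
      rw [Finset.mem_filter] at hp ⊢
      exact ⟨hSD hp.1, hp.2⟩
    · have h1 : S.filter (fun p => p.1 = i)
          = (P.flatten.filter (fun p => p.1 = i)).toFinset := by
        rw [List.toFinset_filter]
        ext p; simp [hS, List.mem_flatten]
      rw [h1, List.toFinset_card_of_nodup (hnodup.filter _),
        ← List.countP_eq_length_filter, List.countP_flatten]
      calc (P.map (List.countP (fun p => decide (p.1 = i)))).sum
          ≤ (P.map (List.countP (fun p => decide (p.1 = i)))).length • 1 := by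
            apply List.sum_le_card_nsmul
            intro x hx
            rw [List.mem_map] at hx
            obtain ⟨π, hπ, rfl⟩ := hx
            exact path_countP_le_one π (hP.1 π hπ).2.2 i
        _ = u := by simp [hlen]
  -- fiberwise sum
  have hfib : ∑ i ∈ D.image Prod.fst, (S.filter (fun p => p.1 = i)).card = S.card := by
    rw [Finset.card_eq_sum_card_fiberwise (f := Prod.fst) (t := D.image Prod.fst)
      (fun p hp => Finset.mem_image_of_mem _ (hSD hp))]
  have hsum : ∑ i ∈ D.image Prod.fst, (S.filter (fun p => p.1 = i)).card
      = ∑ i ∈ D.image Prod.fst, min (rowCount D i) u := by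
    rw [hfib, hScard, htot, conj_sum]
  have hkey : ∀ i ∈ D.image Prod.fst,
      (S.filter (fun p => p.1 = i)).card = min (rowCount D i) u :=
    (Finset.sum_eq_sum_iff_of_le (fun i _ => hfle i)).1 hsum
  intro i hi
  constructor
  · intro hle p hpD hpi
    have h1 : (S.filter (fun p => p.1 = i)).card = rowCount D i := by
      rw [hkey i hi]; omega
    have h2 : S.filter (fun p => p.1 = i) = D.filter (fun q => q.1 = i) := by
      apply Finset.eq_of_subset_of_card_le
      · intro q hq
        rw [Finset.mem_filter] at hq ⊢
        exact ⟨hSD hq.1, hq.2⟩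
      · rw [h1]; exact le_rfl
    have : p ∈ S.filter (fun p => p.1 = i) := by
      rw [h2, Finset.mem_filter]; exact ⟨hpD, hpi⟩
    rw [Finset.mem_filter, hS, List.mem_toFinset] at this
    exact this.1
  · intro hlt
    rw [hkey i hi]
    omega
end

section
/- Let $\lambda$ be a composition of $n$ and let $D$ be a diagram with row-composition $\lambda$ whose node set is the support of an ordered $k$-path $\Pi = (\pi_1, \ldots, \pi_k)$. Let $D(\Pi)$ be the diagram obtained from $D$ by replacing each node of $\pi_j$ by a node in the same row but in column $j$, for $j = 1, \ldots, k$. Then $t^{D(\Pi)} w_D$ is a standard $D(\Pi)$-tableau. -/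
/-- The (0-indexed) entry of a node `p` in the column-filling tableau `t_D`:
the number of nodes of `D` preceding `p` in the column-reading order. -/
def colFill (D : Finset (ℕ × ℕ)) (p : ℕ × ℕ) : ℕ :=
  (D.filter (fun q => q.2 < p.2 ∨ (q.2 = p.2 ∧ q.1 < p.1))).card

/-- Lemma 3.10: let `D` be the support of an ordered `k`-path `P = (π₁,…,π_k)`,
and let `D(P)` be the diagram obtained by moving each node of `π_j` to column `j`
of the same row.  Then `t^{D(P)} w_D` is a standard `D(P)`-tableau: the entries of
`t_D` placed at positions `(row, path index)` weakly increase towards the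
south-east.  Explicitly, for constituent paths `π_i`, `π_j` with `i ≤ j` and
nodes `p ∈ π_i`, `q ∈ π_j` with `p` in a weakly smaller row, the `t_D`-entry of
`p` is at most that of `q`. -/
theorem stmt_16 (D : Finset (ℕ × ℕ)) (P : List (List (ℕ × ℕ)))
    (hP : IsOrderedKPath D P) (hsupp : ∀ p ∈ D, p ∈ P.flatten) :
    ∀ (i j : ℕ) (hi : i < P.length) (hj : j < P.length), i ≤ j →
      ∀ p ∈ P.get ⟨i, hi⟩, ∀ q ∈ P.get ⟨j, hj⟩, p.1 ≤ q.1 →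
        colFill D p ≤ colFill D q := by
  intro i j hi hj hij p hp q hq hrow
  -- It suffices to show p ≤ q in the column order.
  suffices h : p.2 < q.2 ∨ (p.2 = q.2 ∧ p.1 ≤ q.1) by
    apply Finset.card_le_card
    intro r hr
    simp only [Finset.mem_filter] at hr ⊢
    exact ⟨hr.1, by omega⟩
  rcases lt_or_eq_of_le hij with hlt | rfl
  · -- different paths: use Prec
    have hprec : Prec (supp (P.get ⟨i, hi⟩)) (supp (P.get ⟨j, hj⟩)) :=
      List.pairwise_iff_get.mp hP.2 ⟨i, hi⟩ ⟨j, hj⟩ hlt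
    exact Or.inl (hprec p hp q hq hrow)
  · -- same path: use the chain condition
    by_cases hpq : p = q
    · subst hpq; right; exact ⟨rfl, le_refl _⟩
    · have hpath : IsPath D (P.get ⟨i, hi⟩) := hP.1.1 _ (P.get_mem _)
      have htrans : Transitive (fun p q : ℕ × ℕ => p.1 < q.1 ∧ p.2 ≤ q.2) := by
        intro a b c hab hbc; exact ⟨lt_trans hab.1 hbc.1, le_trans hab.2 hbc.2⟩
      have hpw : (P.get ⟨i, hi⟩).Pairwise (fun p q : ℕ × ℕ => p.1 < q.1 ∧ p.2 ≤ q.2) :=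
by
          haveI : IsTrans (ℕ × ℕ) (fun p q : ℕ × ℕ => p.1 < q.1 ∧ p.2 ≤ q.2) := ⟨htrans⟩
          exact List.isChain_iff_pairwise.mp hpath.2.2
      have hpw' : (P.get ⟨i, hi⟩).Pairwise
          (fun p q : ℕ × ℕ => (p.1 < q.1 ∧ p.2 ≤ q.2) ∨ (q.1 < p.1 ∧ q.2 ≤ p.2)) :=
        hpw.imp (fun h => Or.inl h)
      have hsym : Symmetric
          (fun p q : ℕ × ℕ => (p.1 < q.1 ∧ p.2 ≤ q.2) ∨ (q.1 < p.1 ∧ q.2 ≤ p.2)) := by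
        intro a b h; tauto
      have := (haveI : Std.Symm (fun p q : ℕ × ℕ => (p.1 < q.1 ∧ p.2 ≤ q.2) ∨ (q.1 < p.1 ∧ q.2 ≤ p.2)) := ⟨hsym⟩; hpw'.forall hp hq hpq)
      omega
end

section
/- A diagram $D$ is special (obtainable from a Young diagram by permuting rows and columns) if and only if for every pair of nodes $(i,j), (i',j') \in D$ with $i \ne i'$ and $j \ne j'$, at least one of $(i',j)$ and $(i,j')$ is also a node of $D$. This in turn is equivalent to $\lambda_D'' = \mu_D'$, where $\lambda_D$ and $\mu_D$ are the row- and column-compositions of $D$ and prime denotes conjugation. -/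
/-- Number of nodes on column `j` of `D`. -/
def colCount (D : Finset (ℕ × ℕ)) (j : ℕ) : ℕ :=
  (D.filter (fun q => q.2 = j)).card

/-- The `i`-th part of the conjugate `λ_D'` of the row-composition of `D`:
the number of rows with at least `i` nodes. -/
def rowConj (D : Finset (ℕ × ℕ)) (i : ℕ) : ℕ :=
  ((D.image Prod.fst).filter (fun a => i ≤ rowCount D a)).card

/-- The `i`-th part of the double conjugate `λ_D''` of the row-composition:
the number of (potential) parts `k ∈ {1,…,|D|}` of `λ_D'` with `λ'_k ≥ i`. -/
def rowConj2 (D : Finset (ℕ × ℕ)) (i : ℕ) : ℕ :=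
  ((Finset.Icc 1 D.card).filter (fun k => i ≤ rowConj D k)).card

/-- The `i`-th part of the conjugate `μ_D'` of the column-composition of `D`:
the number of columns with at least `i` nodes. -/
def colConj (D : Finset (ℕ × ℕ)) (i : ℕ) : ℕ :=
  ((D.image Prod.snd).filter (fun b => i ≤ colCount D b)).card

/-- The Young diagram `V(ν)` of a (list-encoded) partition `ν`, with rows and
columns indexed from 1. -/
def youngD (ν : List ℕ) : Finset (ℕ × ℕ) :=
  (Finset.range ν.length).biUnion
    (fun i => (Finset.Icc 1 (ν.getD i 0)).image (fun j => (i + 1, j)))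

/-- `D` is special: obtained from a Young diagram by permuting rows and columns. -/
def IsSpecial (D : Finset (ℕ × ℕ)) : Prop :=
  ∃ ν : List ℕ, ν ≠ [] ∧ (∀ x ∈ ν, 0 < x) ∧ ν.Pairwise (· ≥ ·) ∧
    ∃ σ τ : Equiv.Perm ℕ,
      (∀ i ∈ Finset.Icc 1 ν.length, σ i ∈ Finset.Icc 1 ν.length) ∧
      (∀ j ∈ Finset.Icc 1 ν.headI, τ j ∈ Finset.Icc 1 ν.headI) ∧
      D = (youngD ν).image (fun p => (σ p.1, τ p.2))


private lemma card_Icc1 (m : ℕ) : (Finset.Icc 1 m).card = m := by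
  rw [Nat.card_Icc]; omega

private lemma filter_Icc_le {n : ℕ} (m : ℕ) (h : m ≤ n) :
    (Finset.Icc 1 n).filter (fun k => k ≤ m) = Finset.Icc 1 m := by
  ext x; simp only [Finset.mem_filter, Finset.mem_Icc]; omega

private lemma exists_sorted_enum (s : Finset ℕ) (w : ℕ → ℕ) :
    ∃ L : List ℕ, L.length = s.card ∧ L.Nodup ∧ (∀ x, x ∈ L ↔ x ∈ s) ∧
      ∀ a b : ℕ, a < L.length → b < L.length → a ≤ b →
        w (L.getD b 0) ≤ w (L.getD a 0) := by
  classical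
  refine ⟨s.toList.mergeSort (fun a b => decide (w b ≤ w a)), ?_, ?_, ?_, ?_⟩
  · rw [(List.mergeSort_perm _ _).length_eq, Finset.length_toList]
  · exact ((List.mergeSort_perm _ _).nodup_iff).mpr s.nodup_toList
  · intro x; rw [(List.mergeSort_perm _ _).mem_iff, Finset.mem_toList]
  · have hp := List.pairwise_mergeSort (le := fun a b => decide (w b ≤ w a))
      (by intro a b c; simp only [decide_eq_true_eq]; omega)
      (by intro a b; simpa using Nat.le_total (w b) (w a)) s.toList
    rw [List.pairwise_iff_getElem] at hp
    intro a b ha hb hab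
    rcases Nat.eq_or_lt_of_le hab with rfl | h
    · exact le_refl _
    · have := hp a b ha hb h
      simp only [decide_eq_true_eq] at this
      rwa [List.getD_eq_getElem _ _ ha, List.getD_eq_getElem _ _ hb]

private lemma enum_threshold (s : Finset ℕ) (w : ℕ → ℕ) (L : List ℕ)
    (hnd : L.Nodup) (hmem : ∀ x, x ∈ L ↔ x ∈ s)
    (hsort : ∀ a b : ℕ, a < L.length → b < L.length → a ≤ b →
        w (L.getD b 0) ≤ w (L.getD a 0))
    (t k : ℕ) (ht1 : 1 ≤ t) (ht2 : t ≤ L.length) :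
    k ≤ w (L.getD (t-1) 0) ↔ t ≤ (s.filter (fun x => k ≤ w x)).card := by
  classical
  constructor
  · intro hk
    have := Finset.card_le_card_of_injOn (fun a => L.getD a 0)
      (s := Finset.range t) (t := s.filter (fun x => k ≤ w x)) ?_ ?_
    · simpa using this
    · intro a ha
      simp only [Finset.mem_coe, Finset.mem_range] at ha
      have halen : a < L.length := lt_of_lt_of_le ha ht2
      rw [Finset.mem_coe, Finset.mem_filter]
      refine ⟨?_, le_trans hk (hsort a (t-1) halen (by omega) (by omega))⟩
      show L.getD a 0 ∈ s
      rw [← hmem, List.getD_eq_getElem _ _ halen]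
      exact List.getElem_mem _
    · intro a ha b hb hab
      have hab : L.getD a 0 = L.getD b 0 := hab
      simp only [Finset.coe_range, Set.mem_Iio] at ha hb
      have halen : a < L.length := lt_of_lt_of_le ha ht2
      have hblen : b < L.length := lt_of_lt_of_le hb ht2
      rw [List.getD_eq_getElem _ _ halen, List.getD_eq_getElem _ _ hblen] at hab
      exact (hnd.getElem_inj_iff).mp hab
  · intro hcard
    by_contra hk
    push_neg at hk
    have hsub : s.filter (fun x => k ≤ w x) ⊆ (Finset.range (t-1)).image (fun a => L.getD a 0) := by
      intro x hx
      rw [Finset.mem_filter] at hx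
      obtain ⟨hxs, hxw⟩ := hx
      have hxL : x ∈ L := (hmem x).mpr hxs
      have hidx : L.idxOf x < L.length := List.idxOf_lt_length_iff.mpr hxL
      have hxe : L.getD (L.idxOf x) 0 = x := by
        rw [List.getD_eq_getElem _ _ hidx]; exact List.getElem_idxOf hidx
      have : L.idxOf x < t - 1 := by
        by_contra hge
        push_neg at hge
        have := hsort (t-1) (L.idxOf x) (by omega) hidx hge
        rw [hxe] at this
        omega
      exact Finset.mem_image.mpr ⟨L.idxOf x, Finset.mem_range.mpr this, hxe⟩
    have := le_trans (Finset.card_le_card hsub) (Finset.card_image_le)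
    simp only [Finset.card_range] at this
    omega

private lemma exists_perm_of_enum (n : ℕ) (L : List ℕ)
    (hlen : L.length = n) (hnd : L.Nodup) (hmem : ∀ x, x ∈ L ↔ x ∈ Finset.Icc 1 n) :
    ∃ e : Equiv.Perm ℕ,
      (∀ t, 1 ≤ t → t ≤ n → e t = L.getD (t-1) 0) ∧
      (∀ i, i ∈ Finset.Icc 1 n →
        (1 ≤ L.idxOf i + 1 ∧ L.idxOf i + 1 ≤ n ∧ e (L.idxOf i + 1) = i)) := by
  classical
  have hgetmem : ∀ x, 1 ≤ x → x ≤ n → L.getD (x-1) 0 ∈ Finset.Icc 1 n := by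
    intro x h1 h2
    have hx : x - 1 < L.length := by omega
    rw [← hmem, List.getD_eq_getElem _ _ hx]
    exact List.getElem_mem _
  refine ⟨⟨fun x => if x ∈ Finset.Icc 1 n then L.getD (x-1) 0 else x,
          fun x => if x ∈ Finset.Icc 1 n then L.idxOf x + 1 else x, ?_, ?_⟩, ?_, ?_⟩
  · intro x
    by_cases hx : x ∈ Finset.Icc 1 n
    · simp only [hx, if_true]
      rw [Finset.mem_Icc] at hx
      have hx1 : x - 1 < L.length := by omega
      have hmem2 : L.getD (x-1) 0 ∈ Finset.Icc 1 n := hgetmem x hx.1 hx.2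
      rw [if_pos hmem2, List.getD_eq_getElem _ _ hx1]
      have hidx : L.idxOf (L[x-1]) < L.length :=
        List.idxOf_lt_length_iff.mpr (List.getElem_mem _)
      have : L[L.idxOf (L[x-1])] = L[x-1] := List.getElem_idxOf hidx
      have := (hnd.getElem_inj_iff).mp this
      omega
    · simp only [hx, if_false]
  · intro x
    by_cases hx : x ∈ Finset.Icc 1 n
    · simp only [hx, if_true]
      have hxL : x ∈ L := (hmem x).mpr hx
      have hidx : L.idxOf x < L.length := List.idxOf_lt_length_iff.mpr hxL
      have hmem2 : L.idxOf x + 1 ∈ Finset.Icc 1 n := by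
        rw [Finset.mem_Icc]; omega
      rw [if_pos hmem2]
      simp only [Nat.add_sub_cancel]
      rw [List.getD_eq_getElem _ _ hidx]
      exact List.getElem_idxOf hidx
    · simp only [hx, if_false]
  · intro t h1 h2
    simp only [Equiv.coe_fn_mk]
    rw [if_pos (Finset.mem_Icc.mpr ⟨h1, h2⟩)]
  · intro i hi
    have hxL : i ∈ L := (hmem i).mpr hi
    have hidx : L.idxOf i < L.length := List.idxOf_lt_length_iff.mpr hxL
    refine ⟨by omega, by omega, ?_⟩
    simp only [Equiv.coe_fn_mk]
    rw [if_pos (Finset.mem_Icc.mpr ⟨by omega, by omega⟩)]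
    simp only [Nat.add_sub_cancel]
    rw [List.getD_eq_getElem _ _ hidx]
    exact List.getElem_idxOf hidx
section
variable {D : Finset (ℕ × ℕ)} {r c : ℕ}

private lemma mem_row (hrows : D.image Prod.fst = Finset.Icc 1 r) {p : ℕ × ℕ}
    (hp : p ∈ D) : p.1 ∈ Finset.Icc 1 r := by
  rw [← hrows]; exact Finset.mem_image_of_mem _ hp

private lemma mem_col (hcols : D.image Prod.snd = Finset.Icc 1 c) {p : ℕ × ℕ}
    (hp : p ∈ D) : p.2 ∈ Finset.Icc 1 c := by
  rw [← hcols]; exact Finset.mem_image_of_mem _ hp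

private lemma rowCount_eq (hcols : D.image Prod.snd = Finset.Icc 1 c) (i : ℕ) :
    rowCount D i = ((Finset.Icc 1 c).filter (fun j => (i, j) ∈ D)).card := by
  apply Finset.card_nbij (fun q => q.2)
  · intro q hq
    rw [Finset.mem_coe, Finset.mem_filter] at hq
    obtain ⟨hqD, hqi⟩ := hq
    rw [Finset.mem_coe, Finset.mem_filter]
    have hq2 : (i, q.2) = q := by rw [← hqi]
    exact ⟨mem_col hcols hqD, by rw [hq2]; exact hqD⟩
  · intro q hq q' hq' hqq
    simp only [Finset.coe_filter, Set.mem_setOf_eq] at hq hq'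
    exact Prod.ext (hq.2.trans hq'.2.symm) hqq
  · intro j hj
    simp only [Finset.coe_filter, Set.mem_setOf_eq] at hj
    exact ⟨(i, j), by simp [hj.2], rfl⟩

private lemma colCount_eq (hrows : D.image Prod.fst = Finset.Icc 1 r) (j : ℕ) :
    colCount D j = ((Finset.Icc 1 r).filter (fun i => (i, j) ∈ D)).card := by
  apply Finset.card_nbij (fun q => q.1)
  · intro q hq
    rw [Finset.mem_coe, Finset.mem_filter] at hq
    obtain ⟨hqD, hqj⟩ := hq
    rw [Finset.mem_coe, Finset.mem_filter]
    have hq2 : (q.1, j) = q := by rw [← hqj]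
    exact ⟨mem_row hrows hqD, by rw [hq2]; exact hqD⟩
  · intro q hq q' hq' hqq
    simp only [Finset.coe_filter, Set.mem_setOf_eq] at hq hq'
    exact Prod.ext hqq (hq.2.trans hq'.2.symm)
  · intro i hi
    simp only [Finset.coe_filter, Set.mem_setOf_eq] at hi
    exact ⟨(i, j), by simp [hi.2], rfl⟩

private lemma rowCount_le_card : rowCount D i ≤ D.card := Finset.card_filter_le _ _

private lemma colCount_le_r (hrows : D.image Prod.fst = Finset.Icc 1 r) (j : ℕ) :
    colCount D j ≤ r := by
  rw [colCount_eq hrows j]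
  calc ((Finset.Icc 1 r).filter (fun i => (i, j) ∈ D)).card
      ≤ (Finset.Icc 1 r).card := Finset.card_filter_le _ _
    _ = r := card_Icc1 r

private lemma rowCount_le_c (hcols : D.image Prod.snd = Finset.Icc 1 c) (i : ℕ) :
    rowCount D i ≤ c := by
  rw [rowCount_eq hcols i]
  calc ((Finset.Icc 1 c).filter (fun j => (i, j) ∈ D)).card
      ≤ (Finset.Icc 1 c).card := Finset.card_filter_le _ _
    _ = c := card_Icc1 c

private lemma colCount_pos (hcols : D.image Prod.snd = Finset.Icc 1 c) {j : ℕ}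
    (hj : j ∈ Finset.Icc 1 c) : 1 ≤ colCount D j := by
  rw [← hcols] at hj
  obtain ⟨p, hp, hpj⟩ := Finset.mem_image.mp hj
  rw [colCount]
  refine Finset.card_pos.mpr ⟨p, ?_⟩
  rw [Finset.mem_filter]
  exact ⟨hp, hpj⟩

private lemma rowCount_pos (hrows : D.image Prod.fst = Finset.Icc 1 r) {i : ℕ}
    (hi : i ∈ Finset.Icc 1 r) : 1 ≤ rowCount D i := by
  rw [← hrows] at hi
  obtain ⟨p, hp, hpi⟩ := Finset.mem_image.mp hi
  rw [rowCount]
  refine Finset.card_pos.mpr ⟨p, ?_⟩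
  rw [Finset.mem_filter]
  exact ⟨hp, hpi⟩

private lemma rowConj_le_r (hrows : D.image Prod.fst = Finset.Icc 1 r) (k : ℕ) :
    rowConj D k ≤ r := by
  rw [rowConj, hrows]
  calc ((Finset.Icc 1 r).filter _).card ≤ (Finset.Icc 1 r).card := Finset.card_filter_le _ _
    _ = r := card_Icc1 r

private lemma colConj_eq (hcols : D.image Prod.snd = Finset.Icc 1 c) (t : ℕ) :
    colConj D t = ((Finset.Icc 1 c).filter (fun j => t ≤ colCount D j)).card := by
  rw [colConj, hcols]

private lemma rowConj_eq (hrows : D.image Prod.fst = Finset.Icc 1 r) (k : ℕ) :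
    rowConj D k = ((Finset.Icc 1 r).filter (fun i => k ≤ rowCount D i)).card := by
  rw [rowConj, hrows]

private lemma colConj_zero (hrows : D.image Prod.fst = Finset.Icc 1 r)
    (hcols : D.image Prod.snd = Finset.Icc 1 c) {t : ℕ} (ht : r < t) :
    colConj D t = 0 := by
  rw [colConj_eq hcols, Finset.card_eq_zero, Finset.filter_eq_empty_iff]
  intro j _
  have := colCount_le_r hrows j
  omega

private lemma rowConj2_zero (hrows : D.image Prod.fst = Finset.Icc 1 r) {t : ℕ} (ht : r < t) :
    rowConj2 D t = 0 := by
  rw [rowConj2, Finset.card_eq_zero, Finset.filter_eq_empty_iff]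
  intro k _
  have := rowConj_le_r hrows k
  omega

end
section
variable {D : Finset (ℕ × ℕ)} {r c : ℕ}

private lemma rowConj2_eq_rowCount (hrows : D.image Prod.fst = Finset.Icc 1 r)
    (LR : List ℕ) (hlen : LR.length = r) (hnd : LR.Nodup)
    (hmem : ∀ x, x ∈ LR ↔ x ∈ Finset.Icc 1 r)
    (hsort : ∀ a b : ℕ, a < LR.length → b < LR.length → a ≤ b →
        rowCount D (LR.getD b 0) ≤ rowCount D (LR.getD a 0))
    {t : ℕ} (ht1 : 1 ≤ t) (ht2 : t ≤ r) :
    rowConj2 D t = rowCount D (LR.getD (t-1) 0) := by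
  have hthr : ∀ k, t ≤ rowConj D k ↔ k ≤ rowCount D (LR.getD (t-1) 0) := by
    intro k
    rw [rowConj_eq hrows]
    exact (enum_threshold (Finset.Icc 1 r) (rowCount D) LR hnd hmem hsort t k ht1
      (by omega)).symm
  rw [rowConj2, Finset.filter_congr (fun k _ => hthr k),
    filter_Icc_le _ (rowCount_le_card), card_Icc1]

private lemma colCount_getD_thr (hcols : D.image Prod.snd = Finset.Icc 1 c)
    (LC : List ℕ) (hlen : LC.length = c) (hnd : LC.Nodup)
    (hmem : ∀ x, x ∈ LC ↔ x ∈ Finset.Icc 1 c)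
    (hsort : ∀ a b : ℕ, a < LC.length → b < LC.length → a ≤ b →
        colCount D (LC.getD b 0) ≤ colCount D (LC.getD a 0))
    {u : ℕ} (hu1 : 1 ≤ u) (hu2 : u ≤ c) (t : ℕ) :
    t ≤ colCount D (LC.getD (u-1) 0) ↔ u ≤ colConj D t := by
  rw [colConj_eq hcols]
  exact enum_threshold (Finset.Icc 1 c) (colCount D) LC hnd hmem hsort u t hu1 (by omega)

/-- The membership criterion: node `(i,j)` is in `D` iff the rank of row `i`
(in decreasing-size order `LR`) is at most the size of column `j`. -/
private def Crit (D : Finset (ℕ × ℕ)) (r c : ℕ) (LR : List ℕ) : Prop :=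
  ∀ t, 1 ≤ t → t ≤ r → ∀ j ∈ Finset.Icc 1 c,
    ((LR.getD (t-1) 0, j) ∈ D ↔ t ≤ colCount D j)

private lemma crit_to_B (hrows : D.image Prod.fst = Finset.Icc 1 r)
    (hcols : D.image Prod.snd = Finset.Icc 1 c)
    (LR : List ℕ) (hlen : LR.length = r) (hnd : LR.Nodup)
    (hmem : ∀ x, x ∈ LR ↔ x ∈ Finset.Icc 1 r)
    (hcrit : Crit D r c LR) :
    ∀ p ∈ D, ∀ q ∈ D, p.1 ≠ q.1 → p.2 ≠ q.2 →
      ((q.1, p.2) ∈ D ∨ (p.1, q.2) ∈ D) := by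
  intro p hp q hq hp1 _
  -- ranks
  have hpL : p.1 ∈ LR := (hmem p.1).mpr (mem_row hrows hp)
  have hqL : q.1 ∈ LR := (hmem q.1).mpr (mem_row hrows hq)
  set t := LR.idxOf p.1 + 1 with hts
  set t' := LR.idxOf q.1 + 1 with hts'
  have hidxp : LR.idxOf p.1 < LR.length := List.idxOf_lt_length_iff.mpr hpL
  have hidxq : LR.idxOf q.1 < LR.length := List.idxOf_lt_length_iff.mpr hqL
  have hfp : LR.getD (t-1) 0 = p.1 := by
    simp only [hts, Nat.add_sub_cancel]
    rw [List.getD_eq_getElem _ _ hidxp]; exact List.getElem_idxOf hidxp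
  have hfq : LR.getD (t'-1) 0 = q.1 := by
    simp only [hts', Nat.add_sub_cancel]
    rw [List.getD_eq_getElem _ _ hidxq]; exact List.getElem_idxOf hidxq
  have ht : 1 ≤ t ∧ t ≤ r := ⟨by omega, by omega⟩
  have ht' : 1 ≤ t' ∧ t' ≤ r := ⟨by omega, by omega⟩
  have hcp : t ≤ colCount D p.2 := by
    have := (hcrit t ht.1 ht.2 p.2 (mem_col hcols hp)).mp
    rw [hfp] at this
    exact this (by rwa [Prod.mk.eta])
  have hcq : t' ≤ colCount D q.2 := by
    have := (hcrit t' ht'.1 ht'.2 q.2 (mem_col hcols hq)).mp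
    rw [hfq] at this
    exact this (by rwa [Prod.mk.eta])
  rcases le_total t t' with h | h
  · right
    have := (hcrit t ht.1 ht.2 q.2 (mem_col hcols hq)).mpr (by omega)
    rwa [hfp] at this
  · left
    have := (hcrit t' ht'.1 ht'.2 p.2 (mem_col hcols hp)).mpr (by omega)
    rwa [hfq] at this

private lemma crit_to_C (hrows : D.image Prod.fst = Finset.Icc 1 r)
    (hcols : D.image Prod.snd = Finset.Icc 1 c)
    (LR : List ℕ) (hlen : LR.length = r) (hnd : LR.Nodup)
    (hmem : ∀ x, x ∈ LR ↔ x ∈ Finset.Icc 1 r)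
    (hsort : ∀ a b : ℕ, a < LR.length → b < LR.length → a ≤ b →
        rowCount D (LR.getD b 0) ≤ rowCount D (LR.getD a 0))
    (hcrit : Crit D r c LR) :
    ∀ i : ℕ, 1 ≤ i → rowConj2 D i = colConj D i := by
  intro t ht1
  rcases le_or_gt t r with ht2 | ht2
  · rw [rowConj2_eq_rowCount hrows LR hlen hnd hmem hsort ht1 ht2,
      rowCount_eq hcols, colConj_eq hcols]
    congr 1
    exact Finset.filter_congr (fun j hj => hcrit t ht1 ht2 j hj)
  · rw [rowConj2_zero hrows ht2, colConj_zero hrows hcols ht2]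

end
section
variable {D : Finset (ℕ × ℕ)} {r c : ℕ}

private lemma B_to_crit (hrows : D.image Prod.fst = Finset.Icc 1 r)
    (hcols : D.image Prod.snd = Finset.Icc 1 c)
    (LR : List ℕ) (hlen : LR.length = r) (hnd : LR.Nodup)
    (hmem : ∀ x, x ∈ LR ↔ x ∈ Finset.Icc 1 r)
    (hsort : ∀ a b : ℕ, a < LR.length → b < LR.length → a ≤ b →
        rowCount D (LR.getD b 0) ≤ rowCount D (LR.getD a 0))
    (hB : ∀ p ∈ D, ∀ q ∈ D, p.1 ≠ q.1 → p.2 ≠ q.2 →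
      ((q.1, p.2) ∈ D ∨ (p.1, q.2) ∈ D)) :
    Crit D r c LR := by
  classical
  -- rows are a chain under inclusion
  have hch : ∀ i i' : ℕ, (∀ j, (i, j) ∈ D → (i', j) ∈ D) ∨
      (∀ j, (i', j) ∈ D → (i, j) ∈ D) := by
    intro i i'
    by_cases h : ∀ j, (i, j) ∈ D → (i', j) ∈ D
    · exact Or.inl h
    · push_neg at h
      obtain ⟨j0, hj0, hj0'⟩ := h
      right
      intro j' hj'
      by_cases hii : i = i'
      · subst hii; exact hj'
      · by_cases hjj : j' = j0
        · subst hjj; exact absurd hj' hj0'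
        · have := hB (i, j0) hj0 (i', j') hj' (by simpa using hii) (by simpa using Ne.symm hjj)
          simp only at this
          rcases this with h1 | h1
          · exact absurd h1 hj0'
          · exact h1
  -- transfer down the sorted list
  have hdown : ∀ t t' : ℕ, 1 ≤ t' → t' ≤ t → t ≤ r → ∀ j,
      (LR.getD (t-1) 0, j) ∈ D → (LR.getD (t'-1) 0, j) ∈ D := by
    intro t t' ht'1 ht't htr j hj
    set i := LR.getD (t'-1) 0
    set i' := LR.getD (t-1) 0
    have hcount : rowCount D i' ≤ rowCount D i :=
      hsort (t'-1) (t-1) (by omega) (by omega) (by omega)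
    rcases hch i i' with h | h
    · -- R_i ⊆ R_{i'}, but also |R_{i'}| ≤ |R_i|, so equal
      have hsub : (Finset.Icc 1 c).filter (fun j => (i, j) ∈ D) ⊆
          (Finset.Icc 1 c).filter (fun j => (i', j) ∈ D) := by
        intro x hx
        rw [Finset.mem_filter] at hx ⊢
        exact ⟨hx.1, h x hx.2⟩
      have heq : (Finset.Icc 1 c).filter (fun j => (i, j) ∈ D) =
          (Finset.Icc 1 c).filter (fun j => (i', j) ∈ D) := by
        apply Finset.eq_of_subset_of_card_le hsub
        rw [← rowCount_eq hcols, ← rowCount_eq hcols]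
        exact hcount
      have hjc : j ∈ Finset.Icc 1 c := mem_col hcols hj
      have : j ∈ (Finset.Icc 1 c).filter (fun j => (i', j) ∈ D) :=
        Finset.mem_filter.mpr ⟨hjc, hj⟩
      rw [← heq, Finset.mem_filter] at this
      exact this.2
    · exact h j hj
  -- the set of ranks of rows containing a fixed column j
  intro t ht1 ht2 j hj
  set P := (Finset.Icc 1 r).filter (fun t => (LR.getD (t-1) 0, j) ∈ D) with hP
  have hcardP : P.card = colCount D j := by
    rw [colCount_eq hrows]
    apply Finset.card_nbij (fun t => LR.getD (t-1) 0)
    · intro a ha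
      rw [Finset.mem_coe, Finset.mem_filter] at ha ⊢
      obtain ⟨ha1, ha2⟩ := ha
      rw [Finset.mem_Icc] at ha1
      refine ⟨?_, ha2⟩
      have hidx : a - 1 < LR.length := by omega
      beta_reduce
      rw [← hmem, List.getD_eq_getElem _ _ hidx]
      exact List.getElem_mem _
    · intro a ha b hb hab
      simp only [hP, Finset.coe_filter, Set.mem_setOf_eq, Finset.mem_Icc] at ha hb
      have hab : LR.getD (a-1) 0 = LR.getD (b-1) 0 := hab
      have hia : a - 1 < LR.length := by omega
      have hib : b - 1 < LR.length := by omega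
      rw [List.getD_eq_getElem _ _ hia, List.getD_eq_getElem _ _ hib] at hab
      have := (hnd.getElem_inj_iff).mp hab
      omega
    · intro i hi
      simp only [Finset.coe_filter, Set.mem_setOf_eq] at hi
      obtain ⟨hi1, hi2⟩ := hi
      have hiL : i ∈ LR := (hmem i).mpr hi1
      have hidx : LR.idxOf i < LR.length := List.idxOf_lt_length_iff.mpr hiL
      have hgd : LR.getD (LR.idxOf i + 1 - 1) 0 = i := by
        simp only [Nat.add_sub_cancel]
        rw [List.getD_eq_getElem _ _ hidx]
        exact List.getElem_idxOf hidx
      refine ⟨LR.idxOf i + 1, ?_, hgd⟩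
      simp only [hP, Finset.coe_filter, Set.mem_setOf_eq, Finset.mem_Icc]
      exact ⟨⟨by omega, by omega⟩, by rw [hgd]; exact hi2⟩
  have hd : colCount D j ≤ r := colCount_le_r hrows j
  have hPsub : P ⊆ Finset.Icc 1 (colCount D j) := by
    intro a haP
    have haP' := haP
    rw [hP, Finset.mem_filter, Finset.mem_Icc] at haP'
    rw [Finset.mem_Icc]
    refine ⟨haP'.1.1, ?_⟩
    by_contra hgt
    push_neg at hgt
    have hsub2 : Finset.Icc 1 a ⊆ P := by
      intro b hb
      rw [Finset.mem_Icc] at hb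
      rw [hP, Finset.mem_filter, Finset.mem_Icc]
      exact ⟨⟨hb.1, by omega⟩, hdown a b hb.1 hb.2 haP'.1.2 j haP'.2⟩
    have := Finset.card_le_card hsub2
    rw [card_Icc1, hcardP] at this
    omega
  have hPeq : P = Finset.Icc 1 (colCount D j) := by
    apply Finset.eq_of_subset_of_card_le hPsub
    rw [card_Icc1, hcardP]
  constructor
  · intro hmemD
    have : t ∈ P := by
      rw [hP, Finset.mem_filter, Finset.mem_Icc]
      exact ⟨⟨ht1, ht2⟩, hmemD⟩
    rw [hPeq, Finset.mem_Icc] at this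
    exact this.2
  · intro hle
    have : t ∈ P := by
      rw [hPeq, Finset.mem_Icc]
      exact ⟨ht1, hle⟩
    rw [hP, Finset.mem_filter] at this
    exact this.2

end
section
variable {D : Finset (ℕ × ℕ)} {r c : ℕ}

private lemma sum_ite_le (k m : ℕ) :
    (∑ t ∈ Finset.Icc 1 k, if t ≤ m then 1 else 0) = min m k := by
  rw [← Finset.card_filter]
  have : (Finset.Icc 1 k).filter (fun t => t ≤ m) = Finset.Icc 1 (min m k) := by
    ext x; simp only [Finset.mem_filter, Finset.mem_Icc]; omega
  rw [this, card_Icc1]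

private lemma sum_colConj (hcols : D.image Prod.snd = Finset.Icc 1 c) (k : ℕ) :
    ∑ t ∈ Finset.Icc 1 k, colConj D t = ∑ j ∈ Finset.Icc 1 c, min (colCount D j) k := by
  have h1 : ∀ t ∈ Finset.Icc 1 k, colConj D t =
      ∑ j ∈ Finset.Icc 1 c, if t ≤ colCount D j then 1 else 0 := by
    intro t _
    rw [colConj_eq hcols, Finset.card_filter]
  rw [Finset.sum_congr rfl h1, Finset.sum_comm]
  exact Finset.sum_congr rfl (fun j _ => sum_ite_le k (colCount D j))

private lemma sum_rowCount (hcols : D.image Prod.snd = Finset.Icc 1 c)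
    (LR : List ℕ) (k : ℕ) :
    ∑ t ∈ Finset.Icc 1 k, rowCount D (LR.getD (t-1) 0) =
      ∑ j ∈ Finset.Icc 1 c,
        ((Finset.Icc 1 k).filter (fun t => (LR.getD (t-1) 0, j) ∈ D)).card := by
  have h1 : ∀ t ∈ Finset.Icc 1 k, rowCount D (LR.getD (t-1) 0) =
      ∑ j ∈ Finset.Icc 1 c, if (LR.getD (t-1) 0, j) ∈ D then 1 else 0 := by
    intro t _
    rw [rowCount_eq hcols, Finset.card_filter]
  rw [Finset.sum_congr rfl h1, Finset.sum_comm]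
  exact Finset.sum_congr rfl (fun j _ => (Finset.card_filter _ _).symm)

private lemma filter_card_le_min (hrows : D.image Prod.fst = Finset.Icc 1 r)
    (LR : List ℕ) (hlen : LR.length = r) (hnd : LR.Nodup)
    (hmem : ∀ x, x ∈ LR ↔ x ∈ Finset.Icc 1 r)
    {k : ℕ} (hk : k ≤ r) (j : ℕ) :
    ((Finset.Icc 1 k).filter (fun t => (LR.getD (t-1) 0, j) ∈ D)).card ≤
      min (colCount D j) k := by
  refine le_min ?_ ?_
  · rw [colCount_eq hrows]
    apply Finset.card_le_card_of_injOn (fun t => LR.getD (t-1) 0)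
    · intro a ha
      rw [Finset.mem_coe, Finset.mem_filter] at ha ⊢
      obtain ⟨ha1, ha2⟩ := ha
      rw [Finset.mem_Icc] at ha1
      have hidx : a - 1 < LR.length := by omega
      refine ⟨?_, ha2⟩
      beta_reduce
      rw [← hmem, List.getD_eq_getElem _ _ hidx]
      exact List.getElem_mem _
    · intro a ha b hb hab
      simp only [Finset.coe_filter, Set.mem_setOf_eq, Finset.mem_Icc] at ha hb
      have hab : LR.getD (a-1) 0 = LR.getD (b-1) 0 := hab
      have hia : a - 1 < LR.length := by omega
      have hib : b - 1 < LR.length := by omega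
      rw [List.getD_eq_getElem _ _ hia, List.getD_eq_getElem _ _ hib] at hab
      have := (hnd.getElem_inj_iff).mp hab
      omega
  · calc ((Finset.Icc 1 k).filter _).card ≤ (Finset.Icc 1 k).card :=
        Finset.card_filter_le _ _
      _ = k := card_Icc1 k

private lemma C_to_crit (hrows : D.image Prod.fst = Finset.Icc 1 r)
    (hcols : D.image Prod.snd = Finset.Icc 1 c)
    (LR : List ℕ) (hlen : LR.length = r) (hnd : LR.Nodup)
    (hmem : ∀ x, x ∈ LR ↔ x ∈ Finset.Icc 1 r)
    (hsort : ∀ a b : ℕ, a < LR.length → b < LR.length → a ≤ b →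
        rowCount D (LR.getD b 0) ≤ rowCount D (LR.getD a 0))
    (hC : ∀ i : ℕ, 1 ≤ i → rowConj2 D i = colConj D i) :
    Crit D r c LR := by
  have key : ∀ k, k ≤ r → ∀ j ∈ Finset.Icc 1 c,
      ((Finset.Icc 1 k).filter (fun t => (LR.getD (t-1) 0, j) ∈ D)).card =
        min (colCount D j) k := by
    intro k hk
    have hsum : ∑ j ∈ Finset.Icc 1 c,
        ((Finset.Icc 1 k).filter (fun t => (LR.getD (t-1) 0, j) ∈ D)).card =
        ∑ j ∈ Finset.Icc 1 c, min (colCount D j) k := by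
      rw [← sum_rowCount hcols LR k, ← sum_colConj hcols k]
      have h2 : ∀ t ∈ Finset.Icc 1 k, rowCount D (LR.getD (t-1) 0) = rowConj2 D t := by
        intro t ht
        rw [Finset.mem_Icc] at ht
        exact (rowConj2_eq_rowCount hrows LR hlen hnd hmem hsort ht.1 (by omega)).symm
      rw [Finset.sum_congr rfl h2]
      exact Finset.sum_congr rfl (fun t ht => hC t (Finset.mem_Icc.mp ht).1)
    exact fun j hj => (Finset.sum_eq_sum_iff_of_le
      (fun j _ => filter_card_le_min hrows LR hlen hnd hmem hk j)).mp hsum j hj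
  intro t ht1 ht2 j hj
  set d := colCount D j with hdd
  have hd1 : 1 ≤ d := colCount_pos hcols hj
  have hdr : d ≤ r := colCount_le_r hrows j
  have hFd : (Finset.Icc 1 d).filter (fun t => (LR.getD (t-1) 0, j) ∈ D) =
      Finset.Icc 1 d := by
    apply Finset.eq_of_subset_of_card_le (Finset.filter_subset _ _)
    rw [key d hdr j hj, card_Icc1]
    omega
  have hFr : Finset.Icc 1 d =
      (Finset.Icc 1 r).filter (fun t => (LR.getD (t-1) 0, j) ∈ D) := by
    apply Finset.eq_of_subset_of_card_le
    · rw [← hFd]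
      exact Finset.filter_subset_filter _ (Finset.Icc_subset_Icc_right hdr)
    · rw [key r le_rfl j hj, card_Icc1]
      omega
  constructor
  · intro hmemD
    have : t ∈ (Finset.Icc 1 r).filter (fun t => (LR.getD (t-1) 0, j) ∈ D) :=
      Finset.mem_filter.mpr ⟨Finset.mem_Icc.mpr ⟨ht1, ht2⟩, hmemD⟩
    rw [← hFr, Finset.mem_Icc] at this
    exact this.2
  · intro hle
    have : t ∈ Finset.Icc 1 d := Finset.mem_Icc.mpr ⟨ht1, hle⟩
    rw [hFr, Finset.mem_filter] at this
    exact this.2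

end
section
variable {D : Finset (ℕ × ℕ)} {r c : ℕ}

private lemma mem_youngD (ν : List ℕ) (p : ℕ × ℕ) :
    p ∈ youngD ν ↔ ∃ i < ν.length, p.1 = i + 1 ∧ 1 ≤ p.2 ∧ p.2 ≤ ν.getD i 0 := by
  simp only [youngD, Finset.mem_biUnion, Finset.mem_range, Finset.mem_image,
    Finset.mem_Icc]
  constructor
  · rintro ⟨i, hi, j, ⟨hj1, hj2⟩, rfl⟩
    exact ⟨i, hi, rfl, hj1, hj2⟩
  · rintro ⟨i, hi, h1, h2, h3⟩
    exact ⟨i, hi, p.2, ⟨h2, h3⟩, Prod.ext h1.symm rfl⟩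

private lemma special_to_B (hsp : IsSpecial D) :
    ∀ p ∈ D, ∀ q ∈ D, p.1 ≠ q.1 → p.2 ≠ q.2 →
      ((q.1, p.2) ∈ D ∨ (p.1, q.2) ∈ D) := by
  obtain ⟨ν, hnil, hpos, hsorted, σ, τ, hσ, hτ, hD⟩ := hsp
  have hmono : ∀ a b : ℕ, a ≤ b → ∀ hb : b < ν.length, ν.getD b 0 ≤ ν.getD a 0 := by
    have hpair := List.pairwise_iff_getElem.mp hsorted
    intro a b hab hb
    have ha : a < ν.length := lt_of_le_of_lt hab hb
    rw [List.getD_eq_getElem _ _ ha, List.getD_eq_getElem _ _ hb]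
    rcases Nat.eq_or_lt_of_le hab with rfl | h
    · exact le_rfl
    · exact hpair a b ha hb h
  intro p hp q hq h1 h2
  rw [hD] at hp hq
  obtain ⟨u, hu, hup⟩ := Finset.mem_image.mp hp
  obtain ⟨v, hv, hvq⟩ := Finset.mem_image.mp hq
  rw [mem_youngD] at hu hv
  obtain ⟨i, hi, hu1, hu2, hu3⟩ := hu
  obtain ⟨i', hi', hv1, hv2, hv3⟩ := hv
  have hp1 : p.1 = σ u.1 := by rw [← hup]
  have hp2 : p.2 = τ u.2 := by rw [← hup]
  have hq1 : q.1 = σ v.1 := by rw [← hvq]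
  have hq2 : q.2 = τ v.2 := by rw [← hvq]
  rcases le_total i i' with h | h
  · right
    rw [hD]
    refine Finset.mem_image.mpr ⟨(u.1, v.2), ?_, ?_⟩
    · rw [mem_youngD]
      exact ⟨i, hi, hu1, hv2, le_trans hv3 (hmono i i' h hi')⟩
    · exact Prod.ext hp1.symm hq2.symm
  · left
    rw [hD]
    refine Finset.mem_image.mpr ⟨(v.1, u.2), ?_, ?_⟩
    · rw [mem_youngD]
      exact ⟨i', hi', hv1, hu2, le_trans hu3 (hmono i' i h hi)⟩
    · exact Prod.ext hq1.symm hp2.symm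

private lemma crit_to_special (hne : D.Nonempty)
    (hrows : D.image Prod.fst = Finset.Icc 1 r)
    (hcols : D.image Prod.snd = Finset.Icc 1 c)
    (LR : List ℕ) (hlenR : LR.length = r) (hndR : LR.Nodup)
    (hmemR : ∀ x, x ∈ LR ↔ x ∈ Finset.Icc 1 r)
    (hsortR : ∀ a b : ℕ, a < LR.length → b < LR.length → a ≤ b →
        rowCount D (LR.getD b 0) ≤ rowCount D (LR.getD a 0))
    (LC : List ℕ) (hlenC : LC.length = c) (hndC : LC.Nodup)
    (hmemC : ∀ x, x ∈ LC ↔ x ∈ Finset.Icc 1 c)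
    (hsortC : ∀ a b : ℕ, a < LC.length → b < LC.length → a ≤ b →
        colCount D (LC.getD b 0) ≤ colCount D (LC.getD a 0))
    (hcrit : Crit D r c LR) : IsSpecial D := by
  classical
  obtain ⟨p0, hp0⟩ := hne
  have hr1 : 1 ≤ r := by
    have := Finset.mem_Icc.mp (mem_row hrows hp0); omega
  have hc1 : 1 ≤ c := by
    have := Finset.mem_Icc.mp (mem_col hcols hp0); omega
  set ν : List ℕ := LR.map (rowCount D) with hν
  have hlenν : ν.length = r := by rw [hν, List.length_map, hlenR]
  have hνget : ∀ i, i < r → ν.getD i 0 = rowCount D (LR.getD i 0) := by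
    intro i hi
    have hi1 : i < ν.length := by omega
    have hi2 : i < LR.length := by omega
    rw [List.getD_eq_getElem _ _ hi1, List.getD_eq_getElem _ _ hi2]
    simp only [hν, List.getElem_map]
  -- getD membership in rows
  have hgetR : ∀ t, 1 ≤ t → t ≤ r → LR.getD (t-1) 0 ∈ Finset.Icc 1 r := by
    intro t h1 h2
    have hidx : t - 1 < LR.length := by omega
    rw [← hmemR, List.getD_eq_getElem _ _ hidx]
    exact List.getElem_mem _
  have hgetC : ∀ u, 1 ≤ u → u ≤ c → LC.getD (u-1) 0 ∈ Finset.Icc 1 c := by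
    intro u h1 h2
    have hidx : u - 1 < LC.length := by omega
    rw [← hmemC, List.getD_eq_getElem _ _ hidx]
    exact List.getElem_mem _
  -- colConj t = rowCount of the t-th row (via the criterion)
  have hcc : ∀ t, 1 ≤ t → t ≤ r → colConj D t = rowCount D (LR.getD (t-1) 0) := by
    intro t h1 h2
    rw [rowCount_eq hcols, colConj_eq hcols]
    congr 1
    exact (Finset.filter_congr (fun j hj => hcrit t h1 h2 j hj)).symm
  -- head of ν is c
  have hhead : ν.headI = c := by
    have hne' : ν ≠ [] := by
      intro h; rw [h] at hlenν; simp at hlenν; omega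
    obtain ⟨x, l, hxl⟩ := List.exists_cons_of_ne_nil hne'
    have h0 : ν.headI = ν.getD 0 0 := by rw [hxl]; rfl
    rw [h0, hνget 0 (by omega)]
    have : rowCount D (LR.getD 0 0) = colConj D 1 := (hcc 1 le_rfl hr1).symm
    rw [show LR.getD (1-1) 0 = LR.getD 0 0 from rfl] at this
    rw [this, colConj_eq hcols, Finset.filter_true_of_mem
      (fun j hj => colCount_pos hcols hj), card_Icc1]
  obtain ⟨σ, hσ1, hσ2⟩ := exists_perm_of_enum r LR hlenR hndR hmemR
  obtain ⟨τ, hτ1, hτ2⟩ := exists_perm_of_enum c LC hlenC hndC hmemC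
  refine ⟨ν, ?_, ?_, ?_, σ, τ, ?_, ?_, ?_⟩
  · intro h; rw [h] at hlenν; simp at hlenν; omega
  · intro x hx
    rw [hν, List.mem_map] at hx
    obtain ⟨i, hiL, rfl⟩ := hx
    exact rowCount_pos hrows ((hmemR i).mp hiL)
  · rw [hν, List.pairwise_map, List.pairwise_iff_getElem]
    intro a b ha hb hab
    have := hsortR a b ha hb (le_of_lt hab)
    rwa [List.getD_eq_getElem _ _ ha, List.getD_eq_getElem _ _ hb] at this
  · intro i hi
    rw [hlenν] at hi ⊢
    rw [Finset.mem_Icc] at hi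
    rw [hσ1 i hi.1 hi.2]
    exact hgetR i hi.1 hi.2
  · intro j hj
    rw [hhead] at hj ⊢
    rw [Finset.mem_Icc] at hj
    rw [hτ1 j hj.1 hj.2]
    exact hgetC j hj.1 hj.2
  · ext p
    constructor
    · intro hp
      have hi := Finset.mem_Icc.mp (mem_row hrows hp)
      have hj := Finset.mem_Icc.mp (mem_col hcols hp)
      obtain ⟨ht1, ht2, hσt⟩ := hσ2 p.1 (Finset.mem_Icc.mpr hi)
      obtain ⟨hu1, hu2, hτu⟩ := hτ2 p.2 (Finset.mem_Icc.mpr hj)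
      set t := LR.idxOf p.1 + 1
      set u := LC.idxOf p.2 + 1
      have hgdt : LR.getD (t-1) 0 = p.1 := by rw [← hσ1 t ht1 ht2, hσt]
      have hgdu : LC.getD (u-1) 0 = p.2 := by rw [← hτ1 u hu1 hu2, hτu]
      have hcol : t ≤ colCount D p.2 := by
        refine (hcrit t ht1 ht2 p.2 (Finset.mem_Icc.mpr hj)).mp ?_
        rw [hgdt]
        rwa [Prod.mk.eta]
      have hucc : u ≤ colConj D t := by
        refine (colCount_getD_thr hcols LC hlenC hndC hmemC hsortC hu1 hu2 t).mp ?_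
        rwa [hgdu]
      have huν : u ≤ ν.getD (t-1) 0 := by
        rw [hνget (t-1) (by omega), ← hcc t ht1 ht2]
        exact hucc
      refine Finset.mem_image.mpr ⟨(t, u), ?_, ?_⟩
      · rw [mem_youngD]
        exact ⟨t - 1, by omega, by simp; omega, hu1, huν⟩
      · show (σ t, τ u) = p
        rw [hσt, hτu]
    · intro hp
      obtain ⟨w, hw, hwp⟩ := Finset.mem_image.mp hp
      rw [mem_youngD] at hw
      obtain ⟨i0, hi0, hw1, hw2, hw3⟩ := hw
      rw [hlenν] at hi0
      set t := w.1
      set u := w.2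
      have ht1 : 1 ≤ t := by omega
      have ht2 : t ≤ r := by omega
      have hti : t - 1 = i0 := by omega
      have huν : u ≤ rowCount D (LR.getD (t-1) 0) := by
        rw [hti]
        rwa [hνget i0 hi0] at hw3
      have huc : u ≤ c := le_trans huν (rowCount_le_c hcols _)
      have hcol : t ≤ colCount D (LC.getD (u-1) 0) := by
        refine (colCount_getD_thr hcols LC hlenC hndC hmemC hsortC hw2 huc t).mpr ?_
        rwa [hcc t ht1 ht2]
      have hmemD : (LR.getD (t-1) 0, LC.getD (u-1) 0) ∈ D :=
        (hcrit t ht1 ht2 _ (hgetC u hw2 huc)).mpr hcol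
      have : (σ t, τ u) = (LR.getD (t-1) 0, LC.getD (u-1) 0) := by
        rw [hσ1 t ht1 ht2, hτ1 u hw2 huc]
      rw [← hwp]
      show (σ w.1, τ w.2) ∈ D
      rw [this]
      exact hmemD

end
/-- Result 2.2 (Proposition 3.1 of [MPa15]): a diagram `D` (nonempty, with rows
and columns indexed consecutively from 1) is special iff for every pair of nodes
`(i,j), (i',j')` of `D` with `i ≠ i'`, `j ≠ j'`, at least one of `(i',j)`,
`(i,j')` is a node of `D`; and this holds iff `λ_D'' = μ_D'`. -/
theorem stmt_17 (D : Finset (ℕ × ℕ)) (hne : D.Nonempty)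
    (hrows : ∃ r : ℕ, D.image Prod.fst = Finset.Icc 1 r)
    (hcols : ∃ c : ℕ, D.image Prod.snd = Finset.Icc 1 c) :
    (IsSpecial D ↔
      (∀ p ∈ D, ∀ q ∈ D, p.1 ≠ q.1 → p.2 ≠ q.2 →
        ((q.1, p.2) ∈ D ∨ (p.1, q.2) ∈ D))) ∧
    ((∀ p ∈ D, ∀ q ∈ D, p.1 ≠ q.1 → p.2 ≠ q.2 →
        ((q.1, p.2) ∈ D ∨ (p.1, q.2) ∈ D)) ↔
      (∀ i : ℕ, 1 ≤ i → rowConj2 D i = colConj D i)) := by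
  obtain ⟨r, hrows⟩ := hrows
  obtain ⟨c, hcols⟩ := hcols
  obtain ⟨LR, hlenR0, hndR, hmemR, hsortR⟩ :=
    exists_sorted_enum (Finset.Icc 1 r) (rowCount D)
  have hlenR : LR.length = r := by rw [hlenR0, card_Icc1]
  obtain ⟨LC, hlenC0, hndC, hmemC, hsortC⟩ :=
    exists_sorted_enum (Finset.Icc 1 c) (colCount D)
  have hlenC : LC.length = c := by rw [hlenC0, card_Icc1]
  constructor
  · constructor
    · exact special_to_B
    · intro hB
      exact crit_to_special hne hrows hcols LR hlenR hndR hmemR hsortR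
        LC hlenC hndC hmemC hsortC
        (B_to_crit hrows hcols LR hlenR hndR hmemR hsortR hB)
  · constructor
    · intro hB
      exact crit_to_C hrows hcols LR hlenR hndR hmemR hsortR
        (B_to_crit hrows hcols LR hlenR hndR hmemR hsortR hB)
    · intro hC
      exact crit_to_B hrows hcols LR hlenR hndR hmemR
        (C_to_crit hrows hcols LR hlenR hndR hmemR hsortR hC)
end

section
/- Let $r \ge 2$, $n \ge 2$, and let $\lambda = (\lambda_1, \ldots, \lambda_r)$ be a composition of $n$ with $\lambda_r = 1$. Let $\tilde\lambda = (\lambda_1, \ldots, \lambda_{r-1})$, a composition of $n-1$. If $D$ is an admissible diagram with row-composition $\lambda$, then the diagram $\tilde D$ obtained from $D$ by removing the $r$-th row is an admissible diagram with row-composition $\tilde\lambda$; moreover, for every $k$ with $1 \le k \le r'$ (where $r'$ is the number of parts of $\lambda'$), every $k$-path in $D$ of length $\lambda_1' + \cdots + \lambda_k'$ contains the unique node on the $r$-th row of $D$. -/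
/-- The number of parts of the conjugate `λ_D'`, i.e. the maximal row length. -/
def maxRow (D : Finset (ℕ × ℕ)) : ℕ :=
  (D.image Prod.fst).sup (rowCount D)

/-- `D` is admissible: it has subsequence type `λ_D'`, i.e. for `1 ≤ k ≤ r'`
the maximum length of a `k`-path in `D` is `λ'_1 + ⋯ + λ'_k`. -/
def Admissible (D : Finset (ℕ × ℕ)) : Prop :=
  D.Nonempty ∧ ∀ k : ℕ, 1 ≤ k → k ≤ maxRow D →
    (∃ P : List (List (ℕ × ℕ)), IsKPath D P ∧ P.length = k ∧
      P.flatten.length = ∑ j ∈ Finset.Icc 1 k, conjRow D j) ∧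
    (∀ P : List (List (ℕ × ℕ)), IsKPath D P → P.length = k →
      P.flatten.length ≤ ∑ j ∈ Finset.Icc 1 k, conjRow D j)

instance : IsTrans (ℕ × ℕ) (fun p q => p.1 < q.1 ∧ p.2 ≤ q.2) :=
  ⟨fun _ _ _ h1 h2 => ⟨h1.1.trans h2.1, h1.2.trans h2.2⟩⟩

lemma path_pairwise {D : Finset (ℕ × ℕ)} {π : List (ℕ × ℕ)} (h : IsPath D π) :
    π.Pairwise (fun p q => p.1 < q.1 ∧ p.2 ≤ q.2) :=
  List.isChain_iff_pairwise.mp h.2.2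

lemma path_fst_nodup {D : Finset (ℕ × ℕ)} {π : List (ℕ × ℕ)} (h : IsPath D π) :
    (π.map Prod.fst).Nodup := by
  have := (path_pairwise h).map Prod.fst (fun {a b} hab => hab.1)
  exact this.imp (fun {a b} hab => Nat.ne_of_lt hab)

lemma path_nodup_s18 {D : Finset (ℕ × ℕ)} {π : List (ℕ × ℕ)} (h : IsPath D π) :
    π.Nodup := (path_fst_nodup h).of_map _

lemma path_row_inj {D : Finset (ℕ × ℕ)} {π : List (ℕ × ℕ)} (h : IsPath D π)
    {p q : ℕ × ℕ} (hp : p ∈ π) (hq : q ∈ π) (hpq : p.1 = q.1) : p = q :=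
  List.inj_on_of_nodup_map (path_fst_nodup h) hp hq hpq

lemma kpath_flatten_nodup {D : Finset (ℕ × ℕ)} {P : List (List (ℕ × ℕ))}
    (h : IsKPath D P) : P.flatten.Nodup := by
  rw [List.nodup_flatten]
  exact ⟨fun l hl => path_nodup_s18 (h.1 l hl), h.2.imp (fun {a b} hab p hp hq => hab p hp hq)⟩

lemma kpath_of_nodup {D : Finset (ℕ × ℕ)} {P : List (List (ℕ × ℕ))}
    (h1 : ∀ π ∈ P, IsPath D π) (h2 : P.flatten.Nodup) : IsKPath D P := by
  rw [List.nodup_flatten] at h2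
  exact ⟨h1, h2.2.imp (fun {a b} hab p hp hq => hab hp hq)⟩

lemma sum_conjRow (D : Finset (ℕ × ℕ)) (k : ℕ) :
    ∑ j ∈ Finset.Icc 1 k, conjRow D j
      = ∑ i ∈ D.image Prod.fst, min k (rowCount D i) := by
  unfold conjRow
  have h1 : ∀ j, ((D.image Prod.fst).filter (fun i => j ≤ rowCount D i)).card
      = ∑ i ∈ D.image Prod.fst, if j ≤ rowCount D i then 1 else 0 := fun j =>
    Finset.card_filter _ _
  simp_rw [h1]
  rw [Finset.sum_comm]
  refine Finset.sum_congr rfl (fun i _ => ?_)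
  have : ∑ j ∈ Finset.Icc 1 k, (if j ≤ rowCount D i then 1 else 0)
      = ((Finset.Icc 1 k).filter (fun j => j ≤ rowCount D i)).card :=
    (Finset.card_filter _ _).symm
  rw [this]
  have : (Finset.Icc 1 k).filter (fun j => j ≤ rowCount D i)
      = Finset.Icc 1 (min k (rowCount D i)) := by
    ext j; simp [Finset.mem_Icc, Finset.mem_filter]; omega
  rw [this, Nat.card_Icc]; omega

section Count
open Classical in
noncomputable def pathIdx (P : List (List (ℕ × ℕ))) (p : ℕ × ℕ) : ℕ :=
  if hp : ∃ j, ∃ h : j < P.length, p ∈ P[j] then Classical.choose hp else 0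

open Classical in
lemma pathIdx_spec {P : List (List (ℕ × ℕ))} {p : ℕ × ℕ} (hp : p ∈ P.flatten) :
    ∃ h : pathIdx P p < P.length, p ∈ P[pathIdx P p] := by
  rw [List.mem_flatten] at hp
  obtain ⟨l, hl, hpl⟩ := hp
  obtain ⟨j, hj, rfl⟩ := List.mem_iff_getElem.mp hl
  have hex : ∃ j, ∃ h : j < P.length, p ∈ P[j] := ⟨j, hj, hpl⟩
  rw [pathIdx, dif_pos hex]
  exact Classical.choose_spec hex

/-- the fiber decomposition and bounds for a k-path -/
lemma kpath_count {D : Finset (ℕ × ℕ)} {P : List (List (ℕ × ℕ))} (h : IsKPath D P) :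
    P.flatten.length
      = ∑ i ∈ D.image Prod.fst,
          ((P.flatten.toFinset).filter (fun p => p.1 = i)).card ∧
    ∀ i, ((P.flatten.toFinset).filter (fun p => p.1 = i)).card
        ≤ min P.length (rowCount D i) := by
  have hnd : P.flatten.Nodup := kpath_flatten_nodup h
  have hsub : ∀ p ∈ P.flatten, p ∈ D := by
    intro p hp
    rw [List.mem_flatten] at hp
    obtain ⟨l, hl, hpl⟩ := hp
    exact (h.1 l hl).2.1 p hpl
  constructor
  · rw [← List.toFinset_card_of_nodup hnd]
    exact Finset.card_eq_sum_card_fiberwise (fun p hp =>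
      Finset.mem_image_of_mem Prod.fst (hsub p (List.mem_toFinset.mp hp)))
  · intro i
    refine le_min ?_ ?_
    · have h1 : ((P.flatten.toFinset).filter (fun p => p.1 = i)).card
          ≤ (Finset.range P.length).card := by
        refine Finset.card_le_card_of_injOn (pathIdx P) ?_ ?_
        · exact fun p hp => Finset.mem_range.mpr (pathIdx_spec
            (List.mem_toFinset.mp (Finset.mem_filter.mp hp |>.1))).1
        · intro p hp q hq hpq
          simp only [Finset.coe_filter, Set.mem_setOf_eq] at hp hq
          obtain ⟨hp1, hp2⟩ := hp
          obtain ⟨hq1, hq2⟩ := hq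
          obtain ⟨hjp, hmp⟩ := pathIdx_spec (List.mem_toFinset.mp hp1)
          obtain ⟨hjq, hmq⟩ := pathIdx_spec (List.mem_toFinset.mp hq1)
          have hgl : P[pathIdx P p]'hjp = P[pathIdx P q]'hjq := by
            congr 1
          rw [hgl] at hmp
          exact path_row_inj (h.1 _ (List.getElem_mem hjq)) hmp hmq (by rw [hp2, hq2])
      simpa using h1
    · refine Finset.card_le_card ?_
      intro p hp
      rw [Finset.mem_filter] at hp ⊢
      exact ⟨hsub p (List.mem_toFinset.mp hp.1), hp.2⟩

end Count

/-- Part B as a standalone lemma. -/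
lemma partB (r : ℕ) (hr : 1 ≤ r) (D : Finset (ℕ × ℕ))
    (hrows : D.image Prod.fst = Finset.Icc 1 r)
    (hlast : rowCount D r = 1)
    (k : ℕ) (hk : 1 ≤ k)
    (P : List (List (ℕ × ℕ))) (hP : IsKPath D P) (hPl : P.length = k)
    (hflat : P.flatten.length = ∑ j ∈ Finset.Icc 1 k, conjRow D j) :
    ∀ p ∈ D, p.1 = r → p ∈ P.flatten := by
  intro p hp hpr
  by_contra hnp
  obtain ⟨hsum, hbd⟩ := kpath_count hP
  rw [hrows] at hsum
  -- fiber at r is empty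
  have hfr : ((P.flatten.toFinset).filter (fun q => q.1 = r)).card = 0 := by
    rw [Finset.card_eq_zero]
    ext q
    simp only [Finset.mem_filter, List.mem_toFinset, Finset.notMem_empty, iff_false, not_and]
    intro hq hqr
    have hqD : q ∈ D := by
      rw [List.mem_flatten] at hq
      obtain ⟨l, hl, hql⟩ := hq
      exact (hP.1 l hl).2.1 q hql
    -- row r of D is a singleton {p}
    have : q ∈ D.filter (fun z => z.1 = r) := Finset.mem_filter.mpr ⟨hqD, hqr⟩
    have hp' : p ∈ D.filter (fun z => z.1 = r) := Finset.mem_filter.mpr ⟨hp, hpr⟩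
    have hcard1 : (D.filter (fun z => z.1 = r)).card = 1 := hlast
    obtain ⟨x, hx⟩ := Finset.card_eq_one.mp hcard1
    rw [hx, Finset.mem_singleton] at this hp'
    rw [← hp'] at this
    rw [← this] at hnp
    exact hnp hq
  have hid := sum_conjRow D k
  rw [hrows] at hid
  rw [hflat, hid] at hsum
  -- split off r on both sides
  have hrmem : r ∉ Finset.Icc 1 (r - 1) := by simp; omega
  have hIcc : Finset.Icc 1 r = insert r (Finset.Icc 1 (r - 1)) := by
    ext i; simp [Finset.mem_Icc, Finset.mem_insert]; omega
  rw [hIcc, Finset.sum_insert hrmem, Finset.sum_insert hrmem, hfr, hlast] at hsum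
  have hminr : min k 1 = 1 := by omega
  rw [hminr] at hsum
  have : ∑ i ∈ Finset.Icc 1 (r-1), ((P.flatten.toFinset).filter (fun q => q.1 = i)).card
      ≤ ∑ i ∈ Finset.Icc 1 (r-1), min k (rowCount D i) := by
    refine Finset.sum_le_sum (fun i _ => ?_)
    exact (hbd i).trans (by rw [hPl])
  omega

section E
variable (r : ℕ) (D : Finset (ℕ × ℕ))

lemma E_subset : D.filter (fun p => p.1 ≠ r) ⊆ D := Finset.filter_subset _ _

variable {r D} (hr : 2 ≤ r) (hrows : D.image Prod.fst = Finset.Icc 1 r)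

include hr hrows in
lemma E_image : (D.filter (fun p => p.1 ≠ r)).image Prod.fst = Finset.Icc 1 (r - 1) := by
  ext i
  simp only [Finset.mem_image, Finset.mem_filter]
  constructor
  · rintro ⟨p, ⟨hpD, hpr⟩, rfl⟩
    have : p.1 ∈ Finset.Icc 1 r := hrows ▸ Finset.mem_image_of_mem Prod.fst hpD
    rw [Finset.mem_Icc] at this ⊢
    omega
  · intro hi
    rw [Finset.mem_Icc] at hi
    have : i ∈ D.image Prod.fst := by rw [hrows, Finset.mem_Icc]; omega
    obtain ⟨p, hpD, rfl⟩ := Finset.mem_image.mp this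
    exact ⟨p, ⟨hpD, by omega⟩, rfl⟩

lemma E_rowCount {i : ℕ} (hi : i ≠ r) :
    rowCount (D.filter (fun p => p.1 ≠ r)) i = rowCount D i := by
  unfold rowCount
  rw [Finset.filter_filter]
  congr 1
  apply Finset.filter_congr
  intro p _
  constructor
  · exact fun h => h.2
  · exact fun h => ⟨by omega, h⟩

lemma E_maxRow_le : maxRow (D.filter (fun p => p.1 ≠ r)) ≤ maxRow D := by
  unfold maxRow
  refine le_trans (Finset.sup_mono_fun ?_) (Finset.sup_mono (Finset.image_subset_image (E_subset r D)))
  intro i _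
  exact Finset.card_le_card (Finset.filter_subset_filter _ (E_subset r D))

include hr hrows in
lemma E_sum (hlast : rowCount D r = 1) (k : ℕ) (hk : 1 ≤ k) :
    (∑ j ∈ Finset.Icc 1 k, conjRow (D.filter (fun p => p.1 ≠ r)) j) + 1
      = ∑ j ∈ Finset.Icc 1 k, conjRow D j := by
  rw [sum_conjRow, sum_conjRow, hrows, E_image hr hrows]
  have hIcc : Finset.Icc 1 r = insert r (Finset.Icc 1 (r - 1)) := by
    ext i; simp [Finset.mem_Icc, Finset.mem_insert]; omega
  have hrmem : r ∉ Finset.Icc 1 (r - 1) := by simp; omega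
  rw [hIcc, Finset.sum_insert hrmem, hlast]
  have h1 : min k 1 = 1 := by omega
  rw [h1]
  have h2 : ∀ i ∈ Finset.Icc 1 (r-1),
      min k (rowCount (D.filter (fun p => p.1 ≠ r)) i) = min k (rowCount D i) := by
    intro i hi
    rw [Finset.mem_Icc] at hi
    rw [E_rowCount (by omega)]
  rw [Finset.sum_congr rfl h2]
  omega

end E

lemma E_upper (r : ℕ) (hr : 2 ≤ r) (D : Finset (ℕ × ℕ))
    (hrows : D.image Prod.fst = Finset.Icc 1 r)
    (hlast : rowCount D r = 1) (hadm : Admissible D)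
    (k : ℕ) (hk1 : 1 ≤ k) (hkE : k ≤ maxRow (D.filter (fun p => p.1 ≠ r)))
    (P : List (List (ℕ × ℕ))) (hP : IsKPath (D.filter (fun p => p.1 ≠ r)) P)
    (hPl : P.length = k) :
    P.flatten.length ≤ ∑ j ∈ Finset.Icc 1 k, conjRow (D.filter (fun p => p.1 ≠ r)) j := by
  have hkD : k ≤ maxRow D := hkE.trans E_maxRow_le
  have hPD : IsKPath D P := by
    refine ⟨fun π hπ => ?_, hP.2⟩
    obtain ⟨h1, h2, h3⟩ := hP.1 π hπ
    exact ⟨h1, fun p hp => (E_subset r D) (h2 p hp), h3⟩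
  have hub := (hadm.2 k hk1 hkD).2 P hPD hPl
  have hs := E_sum hr hrows hlast k hk1
  by_contra hcon
  push_neg at hcon
  have heq : P.flatten.length = ∑ j ∈ Finset.Icc 1 k, conjRow D j := by omega
  -- get the node on row r
  have hlast' : (D.filter (fun q => q.1 = r)).card = 1 := hlast
  obtain ⟨p₀, hp₀⟩ := Finset.card_eq_one.mp hlast'
  have hp₀mem : p₀ ∈ D.filter (fun q => q.1 = r) := by
    rw [hp₀]; exact Finset.mem_singleton_self _
  have hp₀D : p₀ ∈ D := (Finset.mem_filter.mp hp₀mem).1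
  have hp₀r : p₀.1 = r := by simpa using (Finset.mem_filter.mp hp₀mem).2
  have hmem := partB r (by omega) D hrows hlast k hk1 P hPD hPl heq p₀ hp₀D hp₀r
  obtain ⟨π, hπP, hp₀π⟩ := List.mem_flatten.mp hmem
  have : p₀ ∈ D.filter (fun p => p.1 ≠ r) := (hP.1 π hπP).2.1 p₀ hp₀π
  rw [Finset.mem_filter] at this
  exact this.2 hp₀r

lemma E_exists (r : ℕ) (hr : 2 ≤ r) (D : Finset (ℕ × ℕ))
    (hrows : D.image Prod.fst = Finset.Icc 1 r)
    (hlast : rowCount D r = 1) (hadm : Admissible D)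
    (k : ℕ) (hk1 : 1 ≤ k) (hkE : k ≤ maxRow (D.filter (fun p => p.1 ≠ r))) :
    ∃ P : List (List (ℕ × ℕ)), IsKPath (D.filter (fun p => p.1 ≠ r)) P ∧ P.length = k ∧
      P.flatten.length = ∑ j ∈ Finset.Icc 1 k, conjRow (D.filter (fun p => p.1 ≠ r)) j := by
  set E := D.filter (fun p => p.1 ≠ r) with hE
  have hkD : k ≤ maxRow D := hkE.trans E_maxRow_le
  obtain ⟨⟨P, hPk, hPl, hPf⟩, _⟩ := hadm.2 k hk1 hkD
  have hs := E_sum hr hrows hlast k hk1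
  rw [← hE] at hs
  -- the node on row r
  have hlast' : (D.filter (fun q => q.1 = r)).card = 1 := hlast
  obtain ⟨p₀, hp₀⟩ := Finset.card_eq_one.mp hlast'
  have hp₀mem : p₀ ∈ D.filter (fun q => q.1 = r) := by
    rw [hp₀]; exact Finset.mem_singleton_self _
  have hp₀D : p₀ ∈ D := (Finset.mem_filter.mp hp₀mem).1
  have hp₀r : p₀.1 = r := by simpa using (Finset.mem_filter.mp hp₀mem).2
  have huniq : ∀ q ∈ D, q.1 = r → q = p₀ := by
    intro q hq hqr
    have : q ∈ D.filter (fun z => z.1 = r) := Finset.mem_filter.mpr ⟨hq, hqr⟩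
    rw [hp₀, Finset.mem_singleton] at this
    exact this
  have hrowle : ∀ q ∈ D, q.1 ≤ r := by
    intro q hq
    have : q.1 ∈ Finset.Icc 1 r := hrows ▸ Finset.mem_image_of_mem Prod.fst hq
    exact (Finset.mem_Icc.mp this).2
  have hp₀P : p₀ ∈ P.flatten :=
    partB r (by omega) D hrows hlast k hk1 P hPk hPl hPf p₀ hp₀D hp₀r
  obtain ⟨π, hπP, hp₀π⟩ := List.mem_flatten.mp hp₀P
  obtain ⟨A, B, hPd⟩ := List.append_of_mem hπP
  obtain ⟨u, v, hπd⟩ := List.append_of_mem hp₀π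
  have hπpath : IsPath D π := hPk.1 π hπP
  -- p₀ is the last node of its path
  have hv : v = [] := by
    cases v with
    | nil => rfl
    | cons q v' =>
      have hch : List.Chain' (fun p q => p.1 < q.1 ∧ p.2 ≤ q.2) (p₀ :: q :: v') :=
        hπpath.2.2.suffix (by rw [hπd]; exact List.suffix_append u _)
      have hR := (List.isChain_cons_cons.mp hch).1
      have hqπ : q ∈ π := by rw [hπd]; simp
      have := hrowle q (hπpath.2.1 q hqπ)
      omega
  subst hv
  -- normalized flatten
  have hfl : P.flatten = A.flatten ++ (u ++ p₀ :: B.flatten) := by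
    rw [hPd, hπd]; simp
  have hnd : (A.flatten ++ (u ++ p₀ :: B.flatten)).Nodup := hfl ▸ kpath_flatten_nodup hPk
  rw [List.nodup_append] at hnd
  have hndu := hnd.2.1
  rw [List.nodup_append] at hndu
  have hp₀A : p₀ ∉ A.flatten := fun h => hnd.2.2 p₀ h p₀ (by simp) rfl
  have hp₀u : p₀ ∉ u := fun h => hndu.2.2 p₀ h p₀ (by simp) rfl
  have hp₀B : p₀ ∉ B.flatten := (List.nodup_cons.mp hndu.2.1).1
  have hflnd : P.flatten.Nodup := kpath_flatten_nodup hPk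
  have hinE : ∀ q ∈ P.flatten, q ≠ p₀ → q ∈ E := by
    intro q hq hqne
    obtain ⟨ρ, hρP, hqρ⟩ := List.mem_flatten.mp hq
    have hqD : q ∈ D := (hPk.1 ρ hρP).2.1 q hqρ
    rw [hE, Finset.mem_filter]
    exact ⟨hqD, fun hqr => hqne (huniq q hqD hqr)⟩
  have hApath : ∀ ρ ∈ A, IsPath E ρ := by
    intro ρ hρ
    have hρP : ρ ∈ P := by rw [hPd]; exact List.mem_append_left _ hρ
    obtain ⟨hne, hmem, hch⟩ := hPk.1 ρ hρP
    refine ⟨hne, fun q hq => ?_, hch⟩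
    have hqA : q ∈ A.flatten := List.mem_flatten.mpr ⟨ρ, hρ, hq⟩
    refine hinE q (by rw [hfl]; exact List.mem_append_left _ hqA) (fun h => hp₀A (h ▸ hqA))
  have hBpath : ∀ ρ ∈ B, IsPath E ρ := by
    intro ρ hρ
    have hρP : ρ ∈ P := by rw [hPd]; exact List.mem_append_right _ (List.mem_cons_of_mem _ hρ)
    obtain ⟨hne, hmem, hch⟩ := hPk.1 ρ hρP
    refine ⟨hne, fun q hq => ?_, hch⟩
    have hqB : q ∈ B.flatten := List.mem_flatten.mpr ⟨ρ, hρ, hq⟩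
    refine hinE q (by rw [hfl]; simp [hqB]) (fun h => hp₀B (h ▸ hqB))
  have hPlen : A.length + B.length + 1 = k := by
    rw [hPd] at hPl
    simp at hPl
    omega
  have hPflen : A.flatten.length + u.length + 1 + B.flatten.length
      = ∑ j ∈ Finset.Icc 1 k, conjRow D j := by
    rw [← hPf, hfl]
    simp
    omega
  by_cases hu : u = []
  · -- the path containing p₀ was a singleton: remove it and split another path
    subst hu
    simp only [List.length_nil] at hPflen
    have hQpath : ∀ ρ ∈ A ++ B, IsPath E ρ := by
      intro ρ hρ
      rcases List.mem_append.mp hρ with h | h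
      · exact hApath ρ h
      · exact hBpath ρ h
    have hQfl : (A ++ B).flatten = A.flatten ++ B.flatten := by simp
    have hQnd : (A.flatten ++ B.flatten).Nodup := by
      refine List.Nodup.sublist ?_ (hfl ▸ hflnd)
      refine List.Sublist.append_left ?_ A.flatten
      simpa using List.sublist_cons_self p₀ B.flatten
    -- lower bound: the sum for E is at least k
    obtain ⟨i₀, hi₀mem, hi₀⟩ := Finset.exists_mem_eq_sup (E.image Prod.fst)
      (by rw [E_image hr hrows]; exact ⟨1, by simp; omega⟩) (rowCount E)
    have hmaxE : maxRow E = rowCount E i₀ := hi₀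
    have hminE : min k (rowCount E i₀) = k := by
      rw [hmaxE] at hkE; omega
    have hmk' : k ≤ ∑ j ∈ Finset.Icc 1 k, conjRow E j := by
      rw [sum_conjRow]
      calc k = min k (rowCount E i₀) := hminE.symm
      _ ≤ _ := Finset.single_le_sum (f := fun i => min k (rowCount E i))
          (fun i _ => Nat.zero_le _) hi₀mem
    -- some path in A ++ B has at least two nodes
    have hexσ : ∃ σ ∈ A ++ B, 2 ≤ σ.length := by
      by_contra hcon
      push_neg at hcon
      have hsum : (A ++ B).flatten.length ≤ (A ++ B).length := by
        rw [List.length_flatten]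
        have h1 := List.sum_le_card_nsmul ((A ++ B).map List.length) 1 (by
          intro x hx
          obtain ⟨σ, hσ, rfl⟩ := List.mem_map.mp hx
          have := hcon σ hσ
          omega)
        simpa using h1
      rw [hQfl, List.length_append] at hsum
      simp only [List.length_append] at hsum
      omega
    obtain ⟨σ, hσQ, hσ2⟩ := hexσ
    obtain ⟨C, F, hQd⟩ := List.append_of_mem hσQ
    have hσpath : IsPath E σ := hQpath σ hσQ
    cases σ with
    | nil => simp at hσ2
    | cons s t =>
      have ht : t ≠ [] := by
        cases t
        · simp at hσ2
        · simp
      refine ⟨C ++ [s] :: t :: F, ?_, ?_, ?_⟩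
      · apply kpath_of_nodup
        · intro ρ hρ
          rcases List.mem_append.mp hρ with h | h
          · exact hQpath ρ (by rw [hQd]; exact List.mem_append_left _ h)
          · rcases List.mem_cons.mp h with rfl | h
            · exact ⟨by simp, fun q hq => by
                rw [List.mem_singleton] at hq
                exact hq ▸ hσpath.2.1 s (by simp), List.isChain_singleton s⟩
            · rcases List.mem_cons.mp h with rfl | h
              · exact ⟨ht, fun q hq => hσpath.2.1 q (by simp [hq]),
                  hσpath.2.2.tail⟩
              · exact hQpath ρ (by rw [hQd]; exact List.mem_append_right _ (List.mem_cons_of_mem _ h))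
        · have hflQ : (C ++ [s] :: t :: F).flatten = (A ++ B).flatten := by
            rw [hQd]; simp
          rw [hflQ, hQfl]
          exact hQnd
      · have hlq := congrArg List.length hQd
        simp only [List.length_append, List.length_cons] at hlq
        have hgoal : (C ++ [s] :: t :: F).length = C.length + F.length + 2 := by
          simp
          omega
        rw [hgoal]
        omega
      · have hflQ : (C ++ [s] :: t :: F).flatten = (A ++ B).flatten := by
          rw [hQd]; simp
        rw [hflQ, hQfl, List.length_append]
        omega
  · -- replace the path `u ++ [p₀]` by `u`
    refine ⟨A ++ u :: B, ?_, ?_, ?_⟩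
    · apply kpath_of_nodup
      · intro ρ hρ
        rcases List.mem_append.mp hρ with h | h
        · exact hApath ρ h
        · rcases List.mem_cons.mp h with rfl | h
          · refine ⟨hu, fun q hq => ?_, hπpath.2.2.prefix ⟨[p₀], hπd.symm⟩⟩
            have hqπ : q ∈ π := by rw [hπd]; exact List.mem_append_left _ hq
            refine hinE q (List.mem_flatten.mpr ⟨π, hπP, hqπ⟩) (fun h => hp₀u (h ▸ hq))
          · exact hBpath ρ h
      · have h1 : (A ++ u :: B).flatten = A.flatten ++ (u ++ B.flatten) := by simp
        rw [h1]
        refine List.Nodup.sublist ?_ (hfl ▸ hflnd)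
        refine List.Sublist.append_left ?_ A.flatten
        exact List.Sublist.append (List.Sublist.refl u) (List.sublist_cons_self p₀ B.flatten)
    · simp only [List.length_append, List.length_cons]
      omega
    · simp only [List.flatten_append, List.flatten_cons, List.length_append]
      omega

/-- Lemma 4.1: `λ` a composition of `n` with `r ≥ 2` parts and last part
`λ_r = 1`, `D` an admissible diagram with row-composition `λ` (rows `1,…,r`,
one node on row `r`).  Then the diagram obtained by removing row `r` is
admissible with row-composition `(λ_1,…,λ_{r-1})`, and every `k`-path in `D` of
length `λ'_1 + ⋯ + λ'_k` (for `1 ≤ k ≤ r'`) contains the node on row `r`. -/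
theorem stmt_18 (r n : ℕ) (hr : 2 ≤ r) (hn : 2 ≤ n)
    (D : Finset (ℕ × ℕ)) (hcard : D.card = n)
    (hrows : D.image Prod.fst = Finset.Icc 1 r)
    (hlast : rowCount D r = 1) (hadm : Admissible D) :
    (Admissible (D.filter (fun p => p.1 ≠ r)) ∧
      (D.filter (fun p => p.1 ≠ r)).image Prod.fst = Finset.Icc 1 (r - 1) ∧
      (∀ i : ℕ, i ≤ r - 1 →
        rowCount (D.filter (fun p => p.1 ≠ r)) i = rowCount D i)) ∧
    (∀ k : ℕ, 1 ≤ k → k ≤ maxRow D →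
      ∀ P : List (List (ℕ × ℕ)), IsKPath D P → P.length = k →
        P.flatten.length = ∑ j ∈ Finset.Icc 1 k, conjRow D j →
          ∀ p ∈ D, p.1 = r → p ∈ P.flatten) := by
  refine ⟨⟨⟨?_, ?_⟩, E_image hr hrows, fun i hi => E_rowCount (by omega)⟩, ?_⟩
  · have h1 : (1:ℕ) ∈ (D.filter (fun p => p.1 ≠ r)).image Prod.fst := by
      rw [E_image hr hrows, Finset.mem_Icc]; omega
    obtain ⟨p, hp, -⟩ := Finset.mem_image.mp h1
    exact ⟨p, hp⟩
  · intro k hk1 hk2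
    exact ⟨E_exists r hr D hrows hlast hadm k hk1 hk2,
      fun P hP hPl => E_upper r hr D hrows hlast hadm k hk1 hk2 P hP hPl⟩
  · intro k hk1 _ P hP hPl hPf
    exact partB r (by omega) D hrows hlast k hk1 P hP hPl hPf
end
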